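/- arXiv:2312.00521 — 8 statements merged into one kernel-verified Lean document; each statement's English description precedes it below -/
import Mathlib

section
/- Let Y be a real-valued random variable whose law has a density f with respect to Lebesgue measure, with CDF F, and suppose Y is integrable. Then for every Q ∈ ℝ, the function Q ↦ E[max(Q − Y, 0)] is differentiable at Q with derivative F(Q). -/
open MeasureTheory ProbabilityTheory
open scoped ENNReal NNReal

private lemma key_aux' (y a b : ℝ) (hab : a ≤ b) :
    (∫ t in a..b, (Set.Ici y).indicator (fun _ => (1:ℝ)) t)
      = max (b - y) 0 - max (a - y) 0 := by
  rw [intervalIntegral.integral_of_le hab, integral_indicator_const _ measurableSet_Ici,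
    measureReal_def, Measure.restrict_apply measurableSet_Ici]
  have hae : volume (Set.Ici y ∩ Set.Ioc a b) = volume (Set.Ioc (max a y) b) := by
    apply measure_congr
    have hy : ∀ᵐ t : ℝ, t ≠ y := by
      rw [ae_iff]; simpa using measure_singleton y
    filter_upwards [hy] with t ht
    simp only [eq_iff_iff, Set.mem_inter_iff, Set.mem_Ici, Set.mem_Ioc]
    constructor
    · rintro ⟨h1, h2, h3⟩
      exact ⟨max_lt h2 (lt_of_le_of_ne h1 (Ne.symm ht)), h3⟩
    · rintro ⟨h1, h3⟩
      exact ⟨le_of_lt (lt_of_le_of_lt (le_max_right a y) h1),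
        lt_of_le_of_lt (le_max_left a y) h1, h3⟩
  rw [hae, Real.volume_Ioc, ENNReal.toReal_ofReal', smul_eq_mul, mul_one]
  simp only [max_def]
  split_ifs <;> simp_all <;> linarith

private lemma diff_aux' (ν : Measure ℝ) [IsProbabilityMeasure ν]
    (hi : ∀ Q : ℝ, Integrable (fun y => max (Q - y) 0) ν) (a b : ℝ) (hab : a ≤ b) :
    (∫ y, max (b - y) 0 ∂ν) - (∫ y, max (a - y) 0 ∂ν)
      = ∫ t in a..b, (ν (Set.Iic t)).toReal := by
  have hmeas : Measurable (fun p : ℝ × ℝ => if p.1 ≤ p.2 then (1:ℝ) else 0) := by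
    have : (fun p : ℝ × ℝ => if p.1 ≤ p.2 then (1:ℝ) else 0)
        = Set.indicator {p : ℝ × ℝ | p.1 ≤ p.2} (fun _ => 1) := by
      ext p; simp [Set.indicator_apply, Set.mem_setOf_eq]
    rw [this]
    exact measurable_const.indicator (measurableSet_le measurable_fst measurable_snd)
  have hInt : Integrable (fun p : ℝ × ℝ => if p.1 ≤ p.2 then (1:ℝ) else 0)
      (ν.prod (volume.restrict (Set.Ioc a b))) := by
    refine Integrable.mono' (integrable_const 1) hmeas.aestronglyMeasurable ?_
    filter_upwards with p
    split_ifs <;> simp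
  have swap := integral_integral_swap (μ := ν) (ν := volume.restrict (Set.Ioc a b))
    (f := fun y t => if y ≤ t then (1:ℝ) else 0) hInt
  calc (∫ y, max (b - y) 0 ∂ν) - (∫ y, max (a - y) 0 ∂ν)
      = ∫ y, (max (b - y) 0 - max (a - y) 0) ∂ν := (integral_sub (hi b) (hi a)).symm
    _ = ∫ y, (∫ t in a..b, (Set.Ici y).indicator (fun _ => (1:ℝ)) t) ∂ν := by
        refine integral_congr_ae (Filter.Eventually.of_forall fun y => ?_)
        dsimp only
        rw [key_aux' y a b hab]
    _ = ∫ y, (∫ t in Set.Ioc a b, (if y ≤ t then (1:ℝ) else 0)) ∂ν := by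
        refine integral_congr_ae (Filter.Eventually.of_forall fun y => ?_)
        dsimp only
        rw [intervalIntegral.integral_of_le hab]
        refine integral_congr_ae (Filter.Eventually.of_forall fun t => ?_)
        simp [Set.indicator_apply]
    _ = ∫ t in Set.Ioc a b, (∫ y, (if y ≤ t then (1:ℝ) else 0) ∂ν) := swap
    _ = ∫ t in Set.Ioc a b, (ν (Set.Iic t)).toReal := by
        refine setIntegral_congr_fun measurableSet_Ioc fun t _ => ?_
        have : (fun y => if y ≤ t then (1:ℝ) else 0)
            = Set.indicator (Set.Iic t) (fun _ => (1:ℝ)) := by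
          ext y; simp [Set.indicator_apply]
        rw [this, integral_indicator_const _ measurableSet_Iic, smul_eq_mul, mul_one, measureReal_def]
    _ = ∫ t in a..b, (ν (Set.Iic t)).toReal := (intervalIntegral.integral_of_le hab).symm

/-- If an integrable real random variable `Y` has a density `f` with respect to Lebesgue
measure, then `Q ↦ E[max (Q - Y) 0]` is differentiable at every `Q` with derivative
`F Q`, where `F` is the CDF of `Y`. -/
theorem stmt_2
    {Ω : Type*} [MeasurableSpace Ω] (μ : Measure Ω) [IsProbabilityMeasure μ]
    (Y : Ω → ℝ) (hY : Measurable Y) (hint : Integrable Y μ)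
    (f : ℝ → ℝ≥0∞) (hf : Measurable f)
    (hdens : μ.map Y = volume.withDensity f) :
    ∀ Q : ℝ,
      HasDerivAt (fun Q' : ℝ => ∫ ω, max (Q' - Y ω) 0 ∂μ)
        (cdf (μ.map Y) Q) Q := by
  haveI : IsProbabilityMeasure (μ.map Y) := Measure.isProbabilityMeasure_map hY.aemeasurable
  -- the map measure has no atoms
  have hatom : ∀ x : ℝ, (μ.map Y) {x} = 0 := by
    intro x
    rw [hdens, withDensity_apply _ (measurableSet_singleton x),
      Measure.restrict_eq_zero.mpr (measure_singleton x), lintegral_zero_measure]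
  -- continuity of the cdf
  have hcont : Continuous (cdf (μ.map Y)) := by
    rw [continuous_iff_continuousAt]
    intro x
    rw [(cdf (μ.map Y)).mono.continuousAt_iff_leftLim_eq_rightLim,
      StieltjesFunction.rightLim_eq]
    have h1 : (cdf (μ.map Y)).measure {x} = 0 := by rw [measure_cdf]; exact hatom x
    rw [StieltjesFunction.measure_singleton, ENNReal.ofReal_eq_zero] at h1
    have h2 := (cdf (μ.map Y)).mono.leftLim_le (le_refl x)
    linarith
  -- integrability
  have hmax : ∀ Q : ℝ, Continuous (fun y : ℝ => max (Q - y) 0) := fun Q =>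
    (continuous_const.sub continuous_id).max continuous_const
  have hiμ : ∀ Q : ℝ, Integrable (fun ω => max (Q - Y ω) 0) μ := by
    intro Q
    have : Integrable (fun ω => Q - Y ω) μ := (integrable_const Q).sub hint
    exact this.sup (integrable_const 0)
  have hiν : ∀ Q : ℝ, Integrable (fun y => max (Q - y) 0) (μ.map Y) := by
    intro Q
    rw [integrable_map_measure (hmax Q).aestronglyMeasurable hY.aemeasurable]
    exact hiμ Q
  have gmap : ∀ Q : ℝ, (∫ ω, max (Q - Y ω) 0 ∂μ) = ∫ y, max (Q - y) 0 ∂(μ.map Y) :=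
    fun Q => (integral_map hY.aemeasurable (hmax Q).aestronglyMeasurable).symm
  -- the difference formula, for all a b
  have hdiff : ∀ a b : ℝ,
      (∫ y, max (b - y) 0 ∂(μ.map Y)) - (∫ y, max (a - y) 0 ∂(μ.map Y))
        = ∫ t in a..b, cdf (μ.map Y) t := by
    have hcdf : ∀ a b : ℝ, (∫ t in a..b, ((μ.map Y) (Set.Iic t)).toReal)
        = ∫ t in a..b, cdf (μ.map Y) t := by
      intro a b
      refine intervalIntegral.integral_congr fun t _ => ?_
      rw [cdf_eq_real, measureReal_def]
    intro a b
    rcases le_total a b with hab | hba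
    · rw [← hcdf]; exact diff_aux' (μ.map Y) hiν a b hab
    · have := diff_aux' (μ.map Y) hiν b a hba
      rw [intervalIntegral.integral_symm, ← hcdf, ← this]
      ring
  intro Q
  have heq : (fun Q' : ℝ => ∫ ω, max (Q' - Y ω) 0 ∂μ)
      = fun Q' : ℝ => (∫ ω, max (Q - Y ω) 0 ∂μ) + ∫ t in Q..Q', cdf (μ.map Y) t := by
    funext Q'
    rw [gmap Q', gmap Q]
    have := hdiff Q Q'
    linarith
  rw [heq]
  have hftc : HasDerivAt (fun Q' : ℝ => ∫ t in Q..Q', cdf (μ.map Y) t)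
      (cdf (μ.map Y) Q) Q := by
    refine intervalIntegral.integral_hasDerivAt_right
      (hcont.intervalIntegrable Q Q) ?_ hcont.continuousAt
    exact hcont.stronglyMeasurable.stronglyMeasurableAtFilter
  exact hftc.const_add _
end

section
/- Let Y be a real-valued random variable whose law has a density f with respect to Lebesgue measure, with CDF F, and suppose Y is integrable. Then for every Q ∈ ℝ, the function Q ↦ E[max(Y − Q, 0)] is differentiable at Q with derivative F(Q) − 1. -/
open MeasureTheory ProbabilityTheory
open scoped ENNReal NNReal

/-- If an integrable real random variable `Y` has a density `f` with respect to Lebesgue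
measure, then `Q ↦ E[max (Y - Q) 0]` is differentiable at every `Q` with derivative
`F Q - 1`, where `F` is the CDF of `Y`. -/
theorem stmt_3
    {Ω : Type*} [MeasurableSpace Ω] (μ : Measure Ω) [IsProbabilityMeasure μ]
    (Y : Ω → ℝ) (hY : Measurable Y) (hint : Integrable Y μ)
    (f : ℝ → ℝ≥0∞) (hf : Measurable f)
    (hdens : μ.map Y = volume.withDensity f) :
    ∀ Q : ℝ,
      HasDerivAt (fun Q' : ℝ => ∫ ω, max (Y ω - Q') 0 ∂μ)
        (cdf (μ.map Y) Q - 1) Q := by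
  intro Q
  have hmap : IsProbabilityMeasure (μ.map Y) := Measure.isProbabilityMeasure_map hY.aemeasurable
  -- no atom at Q
  have hatom : μ {ω | Y ω = Q} = 0 := by
    have h1 : μ.map Y {Q} = 0 := by
      rw [hdens, withDensity_apply _ (measurableSet_singleton Q),
        setLIntegral_measure_zero _ _ Real.volume_singleton]
    have h2 : μ.map Y {Q} = μ (Y ⁻¹' {Q}) :=
      Measure.map_apply hY (measurableSet_singleton Q)
    rw [h2] at h1
    simpa [Set.preimage, Set.mem_singleton_iff] using h1
  set F' : Ω → ℝ := Set.indicator {ω | Q < Y ω} (fun _ => (-1 : ℝ)) with hF'def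
  have hset : MeasurableSet {ω | Q < Y ω} := hY measurableSet_Ioi
  have key :
      Integrable F' μ ∧
        HasDerivAt (fun x : ℝ => ∫ ω, max (Y ω - x) 0 ∂μ) (∫ ω, F' ω ∂μ) Q := by
    apply hasDerivAt_integral_of_dominated_loc_of_lip (bound := fun _ => (1 : ℝ))
      (s := Metric.ball Q 1) (Metric.ball_mem_nhds Q one_pos)
    · filter_upwards with x
      exact ((hY.sub measurable_const).max measurable_const).aestronglyMeasurable
    · exact (hint.sub (integrable_const Q)).pos_part
    · exact (Measurable.indicator measurable_const hset).aestronglyMeasurable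
    · filter_upwards with ω
      have : LipschitzWith 1 (fun x : ℝ => max (Y ω - x) 0) := by
        apply LipschitzWith.of_dist_le_mul
        intro x y
        rw [Real.dist_eq, Real.dist_eq, NNReal.coe_one, one_mul]
        calc |max (Y ω - x) 0 - max (Y ω - y) 0| ≤ |(Y ω - x) - (Y ω - y)| :=
              abs_max_sub_max_le_abs _ _ _
          _ = |x - y| := by rw [abs_sub_comm]; ring_nf
      have h1 : (Real.nnabs (1 : ℝ)) = 1 := by
        ext; simp
      rw [h1]
      exact this.lipschitzOnWith
    · exact integrable_const 1
    · filter_upwards [measure_eq_zero_iff_ae_notMem.mp hatom] with ω hω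
      rcases lt_or_gt_of_ne (fun h => hω h) with h | h
      · -- Y ω < Q : function is 0 near Q, derivative 0
        have hF' : F' ω = 0 := by
          simp [hF'def, Set.indicator, not_lt.mpr h.le]
        rw [hF']
        have : (fun x : ℝ => max (Y ω - x) 0) =ᶠ[nhds Q] fun _ => (0 : ℝ) := by
          filter_upwards [Ioi_mem_nhds h] with x hx
          exact max_eq_right (by simp at hx ⊢; linarith)
        exact (hasDerivAt_const Q (0 : ℝ)).congr_of_eventuallyEq this
      · -- Q < Y ω : function is Y ω - x near Q, derivative -1
        have hF' : F' ω = -1 := by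
          simp [hF'def, Set.indicator, h]
        rw [hF']
        have : (fun x : ℝ => max (Y ω - x) 0) =ᶠ[nhds Q] fun x => Y ω - x := by
          filter_upwards [Iio_mem_nhds h] with x hx
          exact max_eq_left (by simp at hx ⊢; linarith)
        have hd : HasDerivAt (fun x : ℝ => Y ω - x) (-1) Q := by
          simpa using (hasDerivAt_id Q).const_sub (Y ω)
        exact hd.congr_of_eventuallyEq this
  have hval : ∫ ω, F' ω ∂μ = cdf (μ.map Y) Q - 1 := by
    rw [hF'def, integral_indicator_const _ hset]
    have hle : μ {ω | Y ω ≤ Q} ≤ 1 := prob_le_one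
    have hcompl : μ {ω | Q < Y ω} = 1 - μ {ω | Y ω ≤ Q} := by
      have : {ω | Q < Y ω} = {ω | Y ω ≤ Q}ᶜ := by
        ext ω; simp [not_le]
      rw [this, measure_compl (show MeasurableSet {ω | Y ω ≤ Q} from hY measurableSet_Iic)
        (measure_ne_top μ _)]
      simp
    have hcdf : cdf (μ.map Y) Q = (μ {ω | Y ω ≤ Q}).toReal := by
      rw [cdf_eq_real, measureReal_def, Measure.map_apply hY measurableSet_Iic]
      rfl
    rw [measureReal_def, hcompl, hcdf, ENNReal.toReal_sub_of_le hle (by simp)]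
    simp
  rw [← hval]
  exact key.2
end

section
/- Let T ≥ 1, let h, b, p ≥ 0 and w_1,...,w_T ∈ ℝ, let q ∈ ℝ^T, and let X_1,...,X_T be independent normal random variables with X_t ~ N(μ_t, σ_t²), σ_t > 0. Define I_t = Σ_{k=1}^t (q_k − X_k), I_t^+ = max(I_t, 0), I_t^− = max(−I_t, 0), a_t = h + b + p·1{t=T}, s_t = √(Σ_{k=1}^t σ_k²), and β_t = (Σ_{k=1}^t (μ_k − q_k))/s_t. Then the expected cost p·E[I_T^−] + Σ_{t=1}^T ( h·E[I_t^+] + b·E[I_t^−] + w_t q_t − p·μ_t ) equals Σ_{t=1}^T [ (a_t·Φ(β_t) − h)·Σ_{k=1}^t (μ_k − q_k) + a_t·φ(β_t)·s_t + w_t q_t − p·μ_t ], where Φ and φ are the standard normal CDF and PDF. -/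
open MeasureTheory ProbabilityTheory
open scoped ENNReal NNReal

/-- The standard normal cumulative distribution function `Φ`. -/
noncomputable def stdNormalCDF (x : ℝ) : ℝ :=
  (gaussianReal 0 1 (Set.Iic x)).toReal

/-- The standard normal probability density function `φ`. -/
noncomputable def stdNormalPDF (x : ℝ) : ℝ := gaussianPDFReal 0 1 x

open Real

noncomputable def npdf (m v x : ℝ) : ℝ := (Real.sqrt (2*π*v))⁻¹ * Real.exp (-(x-m)^2/(2*v))

lemma gaussianPDFReal_eq_npdf (m : ℝ) {v : ℝ} (hv : 0 ≤ v) (x : ℝ) :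
    gaussianPDFReal m v.toNNReal x = npdf m v x := by
  simp [gaussianPDFReal, npdf, Real.coe_toNNReal v hv]

lemma npdf_conv {v₁ v₂ : ℝ} (h1 : 0 < v₁) (h2 : 0 < v₂) (m₁ m₂ x y : ℝ) :
    npdf m₁ v₁ (x - y) * npdf m₂ v₂ y
      = npdf (m₁+m₂) (v₁+v₂) x
        * npdf (m₂ + v₂*(x-m₁-m₂)/(v₁+v₂)) (v₁*v₂/(v₁+v₂)) y := by
  have h12 : 0 < v₁ + v₂ := by linarith
  have hπ : (0:ℝ) < π := Real.pi_pos
  unfold npdf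
  rw [mul_mul_mul_comm, mul_mul_mul_comm _ (Real.exp _), ← Real.exp_add, ← Real.exp_add]
  congr 1
  · rw [← mul_inv, ← mul_inv, ← Real.sqrt_mul (by positivity), ← Real.sqrt_mul (by positivity)]
    congr 1
    field_simp
  · congr 1
    field_simp
    ring

lemma measurable_npdf (m v : ℝ) : Measurable (npdf m v) := by
  unfold npdf
  exact (((measurable_id.sub_const _).pow_const _).neg.div_const _).exp.const_mul _

lemma gaussian_map_add {v₁ v₂ : ℝ} (h1 : 0 < v₁) (h2 : 0 < v₂) (m₁ m₂ : ℝ) :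
    ((gaussianReal m₁ v₁.toNNReal).prod (gaussianReal m₂ v₂.toNNReal)).map
        (fun p : ℝ × ℝ => p.1 + p.2)
      = gaussianReal (m₁ + m₂) (v₁ + v₂).toNNReal := by
  classical
  have h12 : (0:ℝ) < v₁ + v₂ := by linarith
  have hv1 : v₁.toNNReal ≠ 0 := by simp [Real.toNNReal_eq_zero]; linarith
  have hv2 : v₂.toNNReal ≠ 0 := by simp [Real.toNNReal_eq_zero]; linarith
  have hv12 : (v₁ + v₂).toNNReal ≠ 0 := by simp [Real.toNNReal_eq_zero]; linarith
  have hv3 : (0:ℝ) < v₂ * v₁ / (v₂ + v₁) := by positivity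
  ext s hs
  rw [Measure.map_apply (by fun_prop) hs]
  rw [Measure.prod_apply (hs.preimage (by fun_prop))]
  have hslice : ∀ x : ℝ, (Prod.mk x ⁻¹' ((fun p : ℝ × ℝ => p.1 + p.2) ⁻¹' s))
      = {y | x + y ∈ s} := fun x => rfl
  -- rewrite inner measure as lintegral of indicator
  have hinner : ∀ x : ℝ, gaussianReal m₂ v₂.toNNReal {y | x + y ∈ s}
      = ∫⁻ y, s.indicator (fun z => ENNReal.ofReal (npdf m₂ v₂ (z - x))) (x + y) ∂volume := by
    intro x
    have hms : MeasurableSet {y : ℝ | x + y ∈ s} := hs.preimage (by fun_prop)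
    rw [gaussianReal_apply _ hv2]
    rw [← lintegral_indicator hms]
    congr 1 with y
    by_cases hy : x + y ∈ s
    · simp only [Set.indicator_of_mem hy, Set.indicator_of_mem (show y ∈ {y | x + y ∈ s} from hy)]
      rw [gaussianPDF, gaussianPDFReal_eq_npdf _ h2.le]
      simp
    · simp [Set.indicator_of_notMem hy, Set.indicator_of_notMem (show y ∉ {y | x+y ∈ s} from hy)]
  simp_rw [hslice, hinner]
  -- translate: ∫⁻ y, f (x + y) = ∫⁻ y, f y
  have htrans : ∀ x : ℝ, (∫⁻ y, s.indicator (fun z => ENNReal.ofReal (npdf m₂ v₂ (z - x))) (x + y) ∂volume)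
      = ∫⁻ y, s.indicator (fun z => ENNReal.ofReal (npdf m₂ v₂ (z - x))) y ∂volume := fun x =>
    lintegral_add_left_eq_self _ x
  simp_rw [htrans]
  -- outer measure to lintegral with density
  rw [gaussianReal_of_var_ne_zero _ hv1]
  rw [lintegral_withDensity_eq_lintegral_mul _ (measurable_gaussianPDF _ _)
    (by
      apply Measurable.lintegral_prod_right (f := fun x y => s.indicator (fun z => ENNReal.ofReal (npdf m₂ v₂ (z - x))) y)
      apply Measurable.indicator ?_ ?_
      · exact ((measurable_npdf m₂ v₂).comp (measurable_snd.sub measurable_fst)).ennreal_ofReal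
      · exact hs.preimage measurable_snd)]
  simp only [Pi.mul_apply]
  have hpull : ∀ x : ℝ, gaussianPDF m₁ v₁.toNNReal x
        * (∫⁻ y, s.indicator (fun z => ENNReal.ofReal (npdf m₂ v₂ (z - x))) y ∂volume)
      = ∫⁻ y, gaussianPDF m₁ v₁.toNNReal x
          * s.indicator (fun z => ENNReal.ofReal (npdf m₂ v₂ (z - x))) y ∂volume := fun x =>
    (lintegral_const_mul _ (Measurable.indicator
      (((measurable_npdf m₂ v₂).comp (measurable_id.sub_const x)).ennreal_ofReal) hs)).symm
  simp_rw [hpull]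
  have hF : Measurable (Function.uncurry (fun x y =>
      gaussianPDF m₁ v₁.toNNReal x * s.indicator (fun z => ENNReal.ofReal (npdf m₂ v₂ (z - x))) y)) := by
    have : (Function.uncurry (fun x y =>
        gaussianPDF m₁ v₁.toNNReal x * s.indicator (fun z => ENNReal.ofReal (npdf m₂ v₂ (z - x))) y))
        = fun p : ℝ × ℝ => gaussianPDF m₁ v₁.toNNReal p.1 *
            (if p.2 ∈ s then ENNReal.ofReal (npdf m₂ v₂ (p.2 - p.1)) else 0) := by
      ext p
      simp [Function.uncurry, Set.indicator_apply]
    rw [this]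
    apply Measurable.mul ((measurable_gaussianPDF _ _).comp measurable_fst)
    apply Measurable.ite (hs.preimage measurable_snd)
    · exact ((measurable_npdf m₂ v₂).comp (measurable_snd.sub measurable_fst)).ennreal_ofReal
    · exact measurable_const
  rw [lintegral_lintegral_swap hF.aemeasurable]
  have hkey : ∀ y : ℝ, (∫⁻ x, gaussianPDF m₁ v₁.toNNReal x
        * s.indicator (fun z => ENNReal.ofReal (npdf m₂ v₂ (z - x))) y ∂volume)
      = s.indicator (gaussianPDF (m₁ + m₂) (v₁ + v₂).toNNReal) y := by
    intro y
    by_cases hy : y ∈ s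
    · simp only [Set.indicator_of_mem hy]
      have : ∀ x : ℝ, gaussianPDF m₁ v₁.toNNReal x * ENNReal.ofReal (npdf m₂ v₂ (y - x))
          = ENNReal.ofReal (npdf (m₁ + m₂) (v₁ + v₂) y)
            * ENNReal.ofReal (npdf (m₁ + v₁*(y-m₂-m₁)/(v₂+v₁)) (v₂*v₁/(v₂+v₁)) x) := by
        intro x
        rw [gaussianPDF, gaussianPDFReal_eq_npdf _ h1.le,
          ← ENNReal.ofReal_mul (by unfold npdf; positivity),
          ← ENNReal.ofReal_mul (by unfold npdf; positivity)]
        congr 1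
        rw [mul_comm, npdf_conv h2 h1 m₂ m₁ y x]
        ring_nf
      simp_rw [this]
      rw [lintegral_const_mul _ (((measurable_npdf _ _)).ennreal_ofReal)]
      have hone : (∫⁻ x, ENNReal.ofReal (npdf (m₁ + v₁*(y-m₂-m₁)/(v₂+v₁)) (v₂*v₁/(v₂+v₁)) x) ∂volume) = 1 := by
        have hv3' : (v₂*v₁/(v₂+v₁)).toNNReal ≠ 0 := by
          simp only [ne_eq, Real.toNNReal_eq_zero, not_le]; positivity
        have := lintegral_gaussianPDFReal_eq_one (m₁ + v₁*(y-m₂-m₁)/(v₂+v₁)) hv3'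
        rw [← this]
        congr 1 with x
        rw [gaussianPDFReal_eq_npdf _ hv3.le]
      rw [hone, mul_one, gaussianPDF, gaussianPDFReal_eq_npdf _ h12.le]
    · simp [Set.indicator_of_notMem hy]
  simp_rw [hkey]
  rw [lintegral_indicator hs, ← gaussianReal_apply _ hv12]

lemma continuous_npdf (m v : ℝ) : Continuous (npdf m v) := by
  unfold npdf
  continuity

lemma hasDerivAt_neg_npdf {v : ℝ} (hv : 0 < v) (m x : ℝ) :
    HasDerivAt (fun y => -v * npdf m v y) ((x - m) * npdf m v x) x := by
  have h1 : HasDerivAt (fun y : ℝ => -(y - m)^2/(2*v)) (-(x - m)/v) x := by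
    have h0 : HasDerivAt (fun y : ℝ => y - m) 1 x := (hasDerivAt_id x).sub_const m
    have := ((h0.pow 2).neg).div_const (2*v)
    refine this.congr_deriv ?_
    norm_num
    field_simp
    ring
  have h2 := (h1.exp).const_mul ((Real.sqrt (2*π*v))⁻¹)
  have h3 := h2.const_mul (-v)
  refine h3.congr_deriv ?_
  unfold npdf
  field_simp

lemma tendsto_npdf_atTop {v : ℝ} (hv : 0 < v) (m : ℝ) :
    Filter.Tendsto (npdf m v) Filter.atTop (nhds 0) := by
  unfold npdf
  rw [show (0:ℝ) = (Real.sqrt (2*π*v))⁻¹ * 0 by ring]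
  apply Filter.Tendsto.const_mul
  apply Real.tendsto_exp_atBot.comp
  have h1 : Filter.Tendsto (fun x : ℝ => (x - m)^2) Filter.atTop Filter.atTop := by
    have := (Filter.tendsto_pow_atTop (two_ne_zero)).comp
      (Filter.tendsto_atTop_add_const_right Filter.atTop (-m) Filter.tendsto_id)
    simpa [sub_eq_add_neg, Function.comp_def] using this
  have h2 : Filter.Tendsto (fun x : ℝ => -(x - m)^2) Filter.atTop Filter.atBot :=
    Filter.tendsto_neg_atBot_iff.mpr h1
  exact h2.atBot_div_const (by linarith)


lemma sq_toNNReal {s : ℝ} (hs : 0 < s) :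
    (⟨s^2, sq_nonneg s⟩ : ℝ≥0) * 1 = (s^2).toNNReal := by
  ext
  simp [Real.coe_toNNReal _ (sq_nonneg s)]

lemma gaussian_std_map {s : ℝ} (hs : 0 < s) (m : ℝ) :
    (gaussianReal 0 1).map (fun x => s * x + m) = gaussianReal m (s^2).toNNReal := by
  have h1 : (gaussianReal 0 1).map (fun x : ℝ => s * x) = gaussianReal 0 (s^2).toNNReal := by
    rw [show (fun x : ℝ => s * x) = (s * ·) by rfl, gaussianReal_map_const_mul s]
    rw [mul_zero]; exact congrArg _ (sq_toNNReal hs)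
  have h2 : (fun x : ℝ => s * x + m) = (· + m) ∘ (fun x : ℝ => s * x) := rfl
  rw [h2, ← Measure.map_map (by fun_prop) (by fun_prop), h1, gaussianReal_map_add_const m,
    zero_add]

lemma gaussian_cdf {s : ℝ} (hs : 0 < s) (m a : ℝ) :
    ((gaussianReal m (s^2).toNNReal) (Set.Iic a)).toReal = stdNormalCDF ((a - m)/s) := by
  rw [← gaussian_std_map hs m, Measure.map_apply (by fun_prop) measurableSet_Iic]
  have hpre : (fun x : ℝ => s * x + m) ⁻¹' (Set.Iic a) = Set.Iic ((a - m)/s) := by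
    ext x
    simp only [Set.mem_preimage, Set.mem_Iic]
    rw [le_div_iff₀ hs]
    constructor <;> intro hle <;> linarith
  rw [hpre]
  rfl

lemma gaussian_map_neg {v : ℝ≥0} (m : ℝ) :
    (gaussianReal m v).map (fun y : ℝ => -y) = gaussianReal (-m) v := by
  rw [show (fun y : ℝ => -y) = ((-1 : ℝ) * ·) by funext y; ring, gaussianReal_map_const_mul]
  have h1 : (⟨(-1:ℝ)^2, sq_nonneg _⟩ : ℝ≥0) = 1 := by
    ext; norm_num
  rw [show NNReal.mk ((-1:ℝ)^2) (sq_nonneg _) = 1 from h1, one_mul]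
  norm_num

lemma stdNormalCDF_neg (x : ℝ) : stdNormalCDF (-x) = 1 - stdNormalCDF x := by
  have hmap : (gaussianReal 0 1).map (fun y : ℝ => -y) = gaussianReal 0 1 := by
    simpa using gaussian_map_neg (v := 1) 0
  have h1 : gaussianReal 0 1 (Set.Iic (-x)) = gaussianReal 0 1 (Set.Ici x) := by
    conv_lhs => rw [← hmap]
    rw [Measure.map_apply (by fun_prop) measurableSet_Iic]
    congr 1
    ext y
    simp [neg_le]
  have hpt : gaussianReal 0 1 {x} = 0 := by
    have := gaussianReal_absolutelyContinuous 0 (v := 1) (by norm_num)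
    exact this (measure_singleton x)
  have hio : gaussianReal 0 1 (Set.Iio x) = gaussianReal 0 1 (Set.Iic x) := by
    refine le_antisymm (measure_mono Set.Iio_subset_Iic_self) ?_
    calc gaussianReal 0 1 (Set.Iic x) = gaussianReal 0 1 (Set.Iio x ∪ {x}) := by
          rw [Set.Iio_union_right]
      _ ≤ gaussianReal 0 1 (Set.Iio x) + gaussianReal 0 1 {x} := measure_union_le _ _
      _ = gaussianReal 0 1 (Set.Iio x) := by rw [hpt, add_zero]
  have h2 : gaussianReal 0 1 (Set.Ici x) = 1 - gaussianReal 0 1 (Set.Iic x) := by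
    rw [← Set.compl_Iio, prob_compl_eq_one_sub measurableSet_Iio, hio]
  unfold stdNormalCDF
  rw [h1, h2, ENNReal.toReal_sub_of_le prob_le_one ENNReal.one_ne_top, ENNReal.toReal_one]

lemma stdNormalPDF_neg (x : ℝ) : stdNormalPDF (-x) = stdNormalPDF x := by
  unfold stdNormalPDF gaussianPDFReal
  ring_nf

lemma integrableOn_sub_mul_npdf {v : ℝ} (hv : 0 < v) (m : ℝ) :
    MeasureTheory.IntegrableOn (fun x => (x - m) * npdf m v x) (Set.Ioi (0:ℝ)) := by
  have hM : MeasureTheory.IntegrableOn (fun x => (x - m) * npdf m v x) (Set.Ioi (max 0 m)) := by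
    apply integrableOn_Ioi_deriv_of_nonneg' (g := fun y => -v * npdf m v y)
    · exact fun x _ => hasDerivAt_neg_npdf hv m x
    · intro x hx
      have h1 : 0 ≤ x - m := by
        have := (Set.mem_Ioi.mp hx); have := le_max_right (0:ℝ) m; linarith [le_max_right (0:ℝ) m]
      exact mul_nonneg h1 (by unfold npdf; positivity)
    · exact (tendsto_npdf_atTop hv m).const_mul (-v)
  have hC : MeasureTheory.IntegrableOn (fun x => (x - m) * npdf m v x) (Set.Ioc 0 (max 0 m)) := by
    apply Continuous.integrableOn_Ioc
    exact (continuous_id.sub continuous_const).mul (continuous_npdf m v)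
  have := hC.union hM
  rwa [Set.Ioc_union_Ioi_eq_Ioi (le_max_left 0 m)] at this

lemma integral_max_gaussian {s : ℝ} (hs : 0 < s) (m : ℝ) :
    ∫ x, max x 0 ∂(gaussianReal m (s^2).toNNReal)
      = m * stdNormalCDF (m/s) + s * stdNormalPDF (m/s) := by
  have hv : (0:ℝ) < s^2 := by positivity
  have hvne : ((s:ℝ)^2).toNNReal ≠ 0 := by
    simp only [ne_eq, Real.toNNReal_eq_zero, not_le]; positivity
  have hcoe : (((s^2).toNNReal : ℝ≥0) : ℝ) = s^2 := Real.coe_toNNReal _ hv.le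
  -- pdf of the gaussian equals npdf
  have hpdf : ∀ x, gaussianPDFReal m (s^2).toNNReal x = npdf m (s^2) x := by
    intro x; rw [gaussianPDFReal_eq_npdf _ hv.le]
  -- convert to Lebesgue integral
  have h1 : ∫ x, max x 0 ∂(gaussianReal m (s^2).toNNReal)
      = ∫ x, npdf m (s^2) x * max x 0 ∂(volume : Measure ℝ) := by
    rw [gaussianReal_of_var_ne_zero _ hvne]
    have hd : (gaussianPDF m (s^2).toNNReal)
        = fun x => ((fun x => (npdf m (s^2) x).toNNReal) x : ℝ≥0∞) := by
      funext x
      rw [gaussianPDF, hpdf]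
      rfl
    rw [hd, integral_withDensity_eq_integral_smul
      (by exact (measurable_npdf m (s^2)).real_toNNReal) _]
    congr 1 with x
    rw [NNReal.smul_def, smul_eq_mul, Real.coe_toNNReal _ (by unfold npdf; positivity)]
  rw [h1]
  -- reduce to an integral over Ioi 0
  have h2 : (fun x => npdf m (s^2) x * max x 0)
      = Set.indicator (Set.Ioi (0:ℝ)) (fun x => (x - m) * npdf m (s^2) x + m * npdf m (s^2) x) := by
    funext x
    rcases le_or_gt x 0 with hx | hx
    · rw [Set.indicator_of_notMem (by simpa using hx), max_eq_right hx, mul_zero]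
    · rw [Set.indicator_of_mem (Set.mem_Ioi.mpr hx), max_eq_left hx.le]
      ring
  rw [h2, MeasureTheory.integral_indicator measurableSet_Ioi]
  have hint1 : MeasureTheory.IntegrableOn (fun x => (x - m) * npdf m (s^2) x) (Set.Ioi (0:ℝ)) :=
    integrableOn_sub_mul_npdf hv m
  have hint2 : MeasureTheory.IntegrableOn (fun x => m * npdf m (s^2) x) (Set.Ioi (0:ℝ)) := by
    apply MeasureTheory.Integrable.integrableOn
    apply MeasureTheory.Integrable.const_mul
    have := integrable_gaussianPDFReal m (s^2).toNNReal
    simpa [funext hpdf] using this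
  rw [MeasureTheory.integral_add hint1 hint2]
  -- first piece by FTC
  have h3 : ∫ x in Set.Ioi (0:ℝ), (x - m) * npdf m (s^2) x = s^2 * npdf m (s^2) 0 := by
    have := integral_Ioi_of_hasDerivAt_of_tendsto'
      (f := fun y => -(s^2) * npdf m (s^2) y) (f' := fun x => (x - m) * npdf m (s^2) x)
      (a := 0) (m := 0)
      (fun x _ => hasDerivAt_neg_npdf hv m x) hint1
      (by rw [show (0:ℝ) = -(s^2) * 0 by ring]; exact (tendsto_npdf_atTop hv m).const_mul _)
    rw [this]; ring
  -- second piece via CDF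
  have h4 : ∫ x in Set.Ioi (0:ℝ), m * npdf m (s^2) x = m * stdNormalCDF (m/s) := by
    rw [MeasureTheory.integral_const_mul]
    congr 1
    have hnn : 0 ≤ ∫ x in Set.Ioi (0:ℝ), npdf m (s^2) x :=
      MeasureTheory.setIntegral_nonneg measurableSet_Ioi (fun x _ => by unfold npdf; positivity)
    have happ := gaussianReal_apply_eq_integral m hvne (Set.Ioi (0:ℝ))
    have : ∫ x in Set.Ioi (0:ℝ), npdf m (s^2) x
        = ((gaussianReal m (s^2).toNNReal) (Set.Ioi 0)).toReal := by
      rw [happ, ENNReal.toReal_ofReal (by simpa [funext hpdf] using hnn)]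
      simp [funext hpdf]
    rw [this]
    have hsplit : (gaussianReal m (s^2).toNNReal) (Set.Ioi 0)
        = 1 - (gaussianReal m (s^2).toNNReal) (Set.Iic 0) := by
      rw [← Set.compl_Iic, prob_compl_eq_one_sub measurableSet_Iic]
    rw [hsplit, ENNReal.toReal_sub_of_le prob_le_one ENNReal.one_ne_top, ENNReal.toReal_one,
      gaussian_cdf hs m 0]
    rw [show (0 - m)/s = -(m/s) by ring, stdNormalCDF_neg]
    ring
  rw [h3, h4]
  -- evaluate s^2 * npdf m s² 0 = s * φ(m/s)
  have h5 : s^2 * npdf m (s^2) 0 = s * stdNormalPDF (m/s) := by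
    unfold npdf stdNormalPDF gaussianPDFReal
    rw [Real.sqrt_mul (by positivity), Real.sqrt_sq hs.le]
    have hsq : Real.sqrt (2 * π) ≠ 0 := by positivity
    push_cast
    rw [mul_one]
    field_simp
    ring
  rw [h5]
  ring

lemma integral_max_neg_gaussian {s : ℝ} (hs : 0 < s) (m : ℝ) :
    ∫ x, max (-x) 0 ∂(gaussianReal m (s^2).toNNReal)
      = -m * stdNormalCDF (-(m/s)) + s * stdNormalPDF (m/s) := by
  have h1 : ∫ x, max (-x) 0 ∂(gaussianReal m (s^2).toNNReal)
      = ∫ x, max x 0 ∂((gaussianReal m (s^2).toNNReal).map (fun y => -y)) := by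
    exact (integral_map (f := fun x : ℝ => max x 0) measurable_neg.aemeasurable
      ((continuous_id.max continuous_const).aestronglyMeasurable)).symm
  rw [h1, gaussian_map_neg, integral_max_gaussian hs (-m), neg_div, stdNormalPDF_neg]

lemma sum_fin_filter {M : Type*} [AddCommMonoid M] {T t : ℕ} (hT : 0 < T) (ht : t ≤ T)
    (f : ℕ → M) :
    ∑ i ∈ Finset.filter (fun i : Fin T => (i:ℕ) < t) Finset.univ, f ((i:ℕ)+1)
      = ∑ k ∈ Finset.Icc 1 t, f k := by
  refine Finset.sum_nbij' (fun a : Fin T => (a:ℕ)+1)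
    (fun k => (⟨min (k-1) (T-1), by omega⟩ : Fin T)) ?_ ?_ ?_ ?_ ?_
  · intro a ha
    simp only [Finset.mem_filter, Finset.mem_univ, true_and] at ha
    simp only [Finset.mem_Icc]
    omega
  · intro k hk
    simp only [Finset.mem_Icc] at hk
    simp only [Finset.mem_filter, Finset.mem_univ, true_and]
    omega
  · intro a ha
    simp only [Finset.mem_filter, Finset.mem_univ, true_and] at ha
    ext
    simp only
    omega
  · intro k hk
    simp only [Finset.mem_Icc] at hk
    simp only
    omega
  · intro a _
    rfl

/-- Closed form of the expected cost of the static multi-period newsvendor problem under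
independent normal demands `X t ~ N(μ t, σ t ^ 2)`. -/
theorem stmt_8
    {Ω : Type*} [MeasurableSpace Ω] (P : Measure Ω) [IsProbabilityMeasure P]
    (T : ℕ) (hT : 1 ≤ T)
    (h b p : ℝ) (hh : 0 ≤ h) (hb : 0 ≤ b) (hp : 0 ≤ p)
    (w q μv σ : ℕ → ℝ) (hσ : ∀ t, 1 ≤ t → t ≤ T → 0 < σ t)
    (X : ℕ → Ω → ℝ) (hX : ∀ t, 1 ≤ t → t ≤ T → Measurable (X t))
    (hindep : iIndepFun
      (fun i : Fin T => X (i + 1)) P)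
    (hlaw : ∀ t, 1 ≤ t → t ≤ T →
      P.map (X t) = gaussianReal (μv t) (((σ t) ^ 2).toNNReal)) :
    p * (∫ ω, max (-(∑ k ∈ Finset.Icc 1 T, (q k - X k ω))) 0 ∂P)
      + ∑ t ∈ Finset.Icc 1 T,
          (h * (∫ ω, max (∑ k ∈ Finset.Icc 1 t, (q k - X k ω)) 0 ∂P)
            + b * (∫ ω, max (-(∑ k ∈ Finset.Icc 1 t, (q k - X k ω))) 0 ∂P)
            + w t * q t - p * μv t)
    = ∑ t ∈ Finset.Icc 1 T,
        (((h + b + (if t = T then p else 0))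
            * stdNormalCDF ((∑ k ∈ Finset.Icc 1 t, (μv k - q k))
                / Real.sqrt (∑ k ∈ Finset.Icc 1 t, (σ k) ^ 2)) - h)
          * (∑ k ∈ Finset.Icc 1 t, (μv k - q k))
         + (h + b + (if t = T then p else 0))
            * stdNormalPDF ((∑ k ∈ Finset.Icc 1 t, (μv k - q k))
                / Real.sqrt (∑ k ∈ Finset.Icc 1 t, (σ k) ^ 2))
            * Real.sqrt (∑ k ∈ Finset.Icc 1 t, (σ k) ^ 2)
         + w t * q t - p * μv t) := by
  classical
  have hVpos : ∀ t, 1 ≤ t → t ≤ T → (0:ℝ) < ∑ k ∈ Finset.Icc 1 t, (σ k)^2 := by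
    intro t h1 h2
    apply Finset.sum_pos
    · intro k hk
      obtain ⟨hk1, hk2⟩ := Finset.mem_Icc.mp hk
      exact pow_pos (hσ k hk1 (hk2.trans h2)) 2
    · exact ⟨1, Finset.mem_Icc.mpr ⟨le_refl 1, h1⟩⟩
  have hstpos : ∀ t, 1 ≤ t → t ≤ T → (0:ℝ) < Real.sqrt (∑ k ∈ Finset.Icc 1 t, (σ k)^2) :=
    fun t h1 h2 => Real.sqrt_pos.mpr (hVpos t h1 h2)
  have hstsq : ∀ t, 1 ≤ t → t ≤ T →
      (Real.sqrt (∑ k ∈ Finset.Icc 1 t, (σ k)^2))^2 = ∑ k ∈ Finset.Icc 1 t, (σ k)^2 :=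
    fun t h1 h2 => Real.sq_sqrt (hVpos t h1 h2).le
  have hSmeas : ∀ t, t ≤ T → Measurable (fun ω => ∑ k ∈ Finset.Icc 1 t, X k ω) := by
    intro t ht
    apply Finset.measurable_sum
    intro k hk
    obtain ⟨hk1, hk2⟩ := Finset.mem_Icc.mp hk
    exact hX k hk1 (hk2.trans ht)
  have law_sum : ∀ t, 1 ≤ t → t ≤ T →
      P.map (fun ω => ∑ k ∈ Finset.Icc 1 t, X k ω)
        = gaussianReal (∑ k ∈ Finset.Icc 1 t, μv k)
            ((∑ k ∈ Finset.Icc 1 t, (σ k)^2).toNNReal) := by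
    intro t ht1
    induction t, ht1 using Nat.le_induction with
    | base =>
      intro hle
      simp only [Finset.Icc_self, Finset.sum_singleton]
      exact hlaw 1 le_rfl hle
    | succ t ht ih =>
      intro hle
      have htT : t ≤ T := by omega
      have hXt1 : Measurable (X (t+1)) := hX (t+1) (by omega) hle
      have hIndep : IndepFun (fun ω => ∑ k ∈ Finset.Icc 1 t, X k ω) (X (t+1)) P := by
        have hmeas' : ∀ i : Fin T, Measurable (X ((i:ℕ)+1)) := by
          intro i
          exact hX ((i:ℕ)+1) (by omega) (by omega)
        have hfin : (⟨t, by omega⟩ : Fin T) ∉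
            Finset.filter (fun i : Fin T => (i:ℕ) < t) Finset.univ := by simp
        have h2 := hindep.indepFun_finsetSum_of_notMem hmeas' hfin
        have hsum_eq : (∑ i ∈ Finset.filter (fun i : Fin T => (i:ℕ) < t) Finset.univ,
            (fun j : Fin T => X ((j:ℕ)+1)) i) = (fun ω => ∑ k ∈ Finset.Icc 1 t, X k ω) := by
          funext ω
          rw [Finset.sum_apply]
          exact sum_fin_filter (by omega) htT (fun k => X k ω)
        rwa [hsum_eq] at h2
      have hpair := (indepFun_iff_map_prod_eq_prod_map_map
        (hSmeas t htT).aemeasurable hXt1.aemeasurable).mp hIndep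
      have hcomp : (fun ω => ∑ k ∈ Finset.Icc 1 (t+1), X k ω)
          = (fun pp : ℝ × ℝ => pp.1 + pp.2)
            ∘ (fun ω => ((∑ k ∈ Finset.Icc 1 t, X k ω), X (t+1) ω)) := by
        funext ω
        simp only [Function.comp_apply]
        rw [Finset.sum_Icc_succ_top (by omega : 1 ≤ t+1)]
      rw [hcomp, ← Measure.map_map (by fun_prop) ((hSmeas t htT).prodMk hXt1), hpair,
        ih htT, hlaw (t+1) (by omega) hle,
        gaussian_map_add (hVpos t ht htT) (pow_pos (hσ (t+1) (by omega) hle) 2)]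
      rw [Finset.sum_Icc_succ_top (by omega : 1 ≤ t+1),
        Finset.sum_Icc_succ_top (by omega : 1 ≤ t+1)]
  have hYmeas : ∀ t, t ≤ T → Measurable (fun ω => ∑ k ∈ Finset.Icc 1 t, (q k - X k ω)) := by
    intro t ht
    apply Finset.measurable_sum
    intro k hk
    obtain ⟨hk1, hk2⟩ := Finset.mem_Icc.mp hk
    exact measurable_const.sub (hX k hk1 (hk2.trans ht))
  have law_Y : ∀ t, 1 ≤ t → t ≤ T →
      P.map (fun ω => ∑ k ∈ Finset.Icc 1 t, (q k - X k ω))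
        = gaussianReal (-(∑ k ∈ Finset.Icc 1 t, (μv k - q k)))
            (((Real.sqrt (∑ k ∈ Finset.Icc 1 t, (σ k)^2))^2).toNNReal) := by
    intro t h1 h2
    have hYdecomp : (fun ω => ∑ k ∈ Finset.Icc 1 t, (q k - X k ω))
        = ((fun x : ℝ => x + (∑ k ∈ Finset.Icc 1 t, q k)) ∘ (fun y : ℝ => -y))
          ∘ (fun ω => ∑ k ∈ Finset.Icc 1 t, X k ω) := by
      funext ω
      simp only [Function.comp_apply, Finset.sum_sub_distrib]
      ring
    rw [hYdecomp, ← Measure.map_map (by fun_prop) (hSmeas t h2), law_sum t h1 h2,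
      ← Measure.map_map (by fun_prop) (by fun_prop), gaussian_map_neg,
      gaussianReal_map_add_const]
    rw [hstsq t h1 h2]
    congr 1
    rw [Finset.sum_sub_distrib]
    ring
  have Eplus : ∀ t, 1 ≤ t → t ≤ T →
      ∫ ω, max (∑ k ∈ Finset.Icc 1 t, (q k - X k ω)) 0 ∂P
        = -(∑ k ∈ Finset.Icc 1 t, (μv k - q k))
            * (1 - stdNormalCDF ((∑ k ∈ Finset.Icc 1 t, (μv k - q k))
                / Real.sqrt (∑ k ∈ Finset.Icc 1 t, (σ k)^2)))
          + Real.sqrt (∑ k ∈ Finset.Icc 1 t, (σ k)^2)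
            * stdNormalPDF ((∑ k ∈ Finset.Icc 1 t, (μv k - q k))
                / Real.sqrt (∑ k ∈ Finset.Icc 1 t, (σ k)^2)) := by
    intro t h1 h2
    rw [show (∫ ω, max (∑ k ∈ Finset.Icc 1 t, (q k - X k ω)) 0 ∂P)
        = ∫ x, max x 0 ∂(P.map (fun ω => ∑ k ∈ Finset.Icc 1 t, (q k - X k ω))) from
      (integral_map (hYmeas t h2).aemeasurable
        ((continuous_id.max continuous_const).aestronglyMeasurable)).symm]
    rw [law_Y t h1 h2, integral_max_gaussian (hstpos t h1 h2), neg_div, stdNormalPDF_neg,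
      stdNormalCDF_neg]
  have Eminus : ∀ t, 1 ≤ t → t ≤ T →
      ∫ ω, max (-(∑ k ∈ Finset.Icc 1 t, (q k - X k ω))) 0 ∂P
        = (∑ k ∈ Finset.Icc 1 t, (μv k - q k))
            * stdNormalCDF ((∑ k ∈ Finset.Icc 1 t, (μv k - q k))
                / Real.sqrt (∑ k ∈ Finset.Icc 1 t, (σ k)^2))
          + Real.sqrt (∑ k ∈ Finset.Icc 1 t, (σ k)^2)
            * stdNormalPDF ((∑ k ∈ Finset.Icc 1 t, (μv k - q k))
                / Real.sqrt (∑ k ∈ Finset.Icc 1 t, (σ k)^2)) := by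
    intro t h1 h2
    rw [show (∫ ω, max (-(∑ k ∈ Finset.Icc 1 t, (q k - X k ω))) 0 ∂P)
        = ∫ x, max (-x) 0 ∂(P.map (fun ω => ∑ k ∈ Finset.Icc 1 t, (q k - X k ω))) from
      (integral_map (hYmeas t h2).aemeasurable
        ((continuous_id.neg.max continuous_const).aestronglyMeasurable)).symm]
    rw [law_Y t h1 h2, integral_max_neg_gaussian (hstpos t h1 h2), neg_div, neg_neg, neg_neg,
      stdNormalPDF_neg]
  -- final algebra
  rw [Eminus T hT le_rfl]
  have hsplit : p * ((∑ k ∈ Finset.Icc 1 T, (μv k - q k))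
            * stdNormalCDF ((∑ k ∈ Finset.Icc 1 T, (μv k - q k))
                / Real.sqrt (∑ k ∈ Finset.Icc 1 T, (σ k)^2))
          + Real.sqrt (∑ k ∈ Finset.Icc 1 T, (σ k)^2)
            * stdNormalPDF ((∑ k ∈ Finset.Icc 1 T, (μv k - q k))
                / Real.sqrt (∑ k ∈ Finset.Icc 1 T, (σ k)^2)))
      = ∑ t ∈ Finset.Icc 1 T, (if t = T then
          p * ((∑ k ∈ Finset.Icc 1 t, (μv k - q k))
            * stdNormalCDF ((∑ k ∈ Finset.Icc 1 t, (μv k - q k))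
                / Real.sqrt (∑ k ∈ Finset.Icc 1 t, (σ k)^2))
          + Real.sqrt (∑ k ∈ Finset.Icc 1 t, (σ k)^2)
            * stdNormalPDF ((∑ k ∈ Finset.Icc 1 t, (μv k - q k))
                / Real.sqrt (∑ k ∈ Finset.Icc 1 t, (σ k)^2))) else 0) := by
    rw [Finset.sum_ite_eq' (Finset.Icc 1 T) T, if_pos (Finset.mem_Icc.mpr ⟨hT, le_rfl⟩)]
  rw [hsplit, ← Finset.sum_add_distrib]
  apply Finset.sum_congr rfl
  intro t htmem
  obtain ⟨ht1, ht2⟩ := Finset.mem_Icc.mp htmem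
  rw [Eplus t ht1 ht2, Eminus t ht1 ht2]
  by_cases hteq : t = T
  · simp only [if_pos hteq]
    ring
  · simp only [if_neg hteq]
    ring
end

section
/- Let T ≥ 1, h, b, p ≥ 0, w ∈ ℝ^T, q ∈ ℝ^T, σ ∈ ℝ_{>0}^T, and define for μ ∈ ℝ^T: a_t = h + b + p·1{t=T}, s_t = √(Σ_{k=1}^t σ_k²), β_t = (Σ_{k=1}^t (μ_k − q_k))/s_t, and C_ω(q) = Σ_{t=1}^T [ (a_t·Φ(β_t) − h)·Σ_{k=1}^t (μ_k − q_k) + a_t·φ(β_t)·s_t + w_t q_t − p·μ_t ]. Then for every τ ∈ {1,...,T}, the function μ_τ ↦ C_ω(q) (with all other μ_k and all σ_k fixed) is convex on ℝ. -/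
open MeasureTheory ProbabilityTheory
open scoped ENNReal NNReal

/-- Closed-form expected cost `C_ω(q)` of the multi-period newsvendor problem under
independent normal demands, as a function of the parameter vectors `μv` and `σ`. -/
noncomputable def normalCost (T : ℕ) (h b p : ℝ) (w q σ μv : ℕ → ℝ) : ℝ :=
  ∑ t ∈ Finset.Icc 1 T,
    (((h + b + (if t = T then p else 0))
        * stdNormalCDF ((∑ k ∈ Finset.Icc 1 t, (μv k - q k))
            / Real.sqrt (∑ k ∈ Finset.Icc 1 t, (σ k) ^ 2)) - h)
      * (∑ k ∈ Finset.Icc 1 t, (μv k - q k))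
     + (h + b + (if t = T then p else 0))
        * stdNormalPDF ((∑ k ∈ Finset.Icc 1 t, (μv k - q k))
            / Real.sqrt (∑ k ∈ Finset.Icc 1 t, (σ k) ^ 2))
        * Real.sqrt (∑ k ∈ Finset.Icc 1 t, (σ k) ^ 2)
     + w t * q t - p * μv t)

lemma continuous_stdNormalPDF : Continuous stdNormalPDF := by
  unfold stdNormalPDF gaussianPDFReal
  fun_prop

lemma stdNormalCDF_eq (x : ℝ) : stdNormalCDF x = ∫ t in Set.Iic x, stdNormalPDF t := by
  unfold stdNormalCDF stdNormalPDF
  rw [gaussianReal, if_neg one_ne_zero, withDensity_apply _ measurableSet_Iic]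
  simp only [gaussianPDF]
  rw [← ofReal_integral_eq_lintegral_ofReal
    ((integrable_gaussianPDFReal 0 1).restrict)
    (ae_of_all _ (gaussianPDFReal_nonneg 0 1))]
  rw [ENNReal.toReal_ofReal (integral_nonneg (gaussianPDFReal_nonneg 0 1))]

lemma hasDerivAt_stdNormalCDF (x : ℝ) : HasDerivAt stdNormalCDF (stdNormalPDF x) x := by
  have hint : Integrable stdNormalPDF := integrable_gaussianPDFReal 0 1
  have key : ∀ y : ℝ, stdNormalCDF y = stdNormalCDF 0 + ∫ t in (0:ℝ)..y, stdNormalPDF t := by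
    intro y
    rw [stdNormalCDF_eq, stdNormalCDF_eq,
      ← intervalIntegral.integral_Iic_sub_Iic hint.integrableOn hint.integrableOn]
    ring
  have h1 : HasDerivAt (fun y => stdNormalCDF 0 + ∫ t in (0:ℝ)..y, stdNormalPDF t)
      (stdNormalPDF x) x := by
    refine HasDerivAt.const_add _ ?_
    exact intervalIntegral.integral_hasDerivAt_right hint.intervalIntegrable
      hint.aestronglyMeasurable.stronglyMeasurableAtFilter
      continuous_stdNormalPDF.continuousAt
  exact h1.congr_of_eventuallyEq (Filter.Eventually.of_forall fun y => key y)

lemma hasDerivAt_stdNormalPDF (x : ℝ) :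
    HasDerivAt stdNormalPDF (-x * stdNormalPDF x) x := by
  have hpdf : stdNormalPDF = fun y : ℝ =>
      (Real.sqrt (2 * Real.pi))⁻¹ * Real.exp (-y ^ 2 / 2) := by
    funext y
    simp [stdNormalPDF, gaussianPDFReal]
  rw [hpdf]
  have h1 : HasDerivAt (fun y : ℝ => -y ^ 2 / 2) (-x) x := by
    have := ((hasDerivAt_pow 2 x).neg).div_const 2
    exact this.congr_deriv (by simp; ring)
  have h2 := (h1.exp).const_mul (Real.sqrt (2 * Real.pi))⁻¹
  exact h2.congr_deriv (by simp only; ring)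

lemma monotone_stdNormalCDF : Monotone stdNormalCDF := by
  intro x y hxy
  exact ENNReal.toReal_mono (measure_ne_top _ _)
    (measure_mono (Set.Iic_subset_Iic.2 hxy))

lemma helper_hasDerivAt (a s hc c m k : ℝ) (hs : 0 < s) (x : ℝ) :
    HasDerivAt (fun x : ℝ => (a * stdNormalCDF ((x + c) / s) - hc) * (x + c)
        + a * stdNormalPDF ((x + c) / s) * s + m * x + k)
      (a * stdNormalCDF ((x + c) / s) - hc + m) x := by
  have hs' : s ≠ 0 := ne_of_gt hs
  have hu : HasDerivAt (fun x : ℝ => (x + c) / s) (1 / s) x := by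
    simpa using ((hasDerivAt_id x).add_const c).div_const s
  have hΦ : HasDerivAt (fun x : ℝ => stdNormalCDF ((x + c) / s))
      (stdNormalPDF ((x + c) / s) * (1 / s)) x :=
    HasDerivAt.comp (h₂ := stdNormalCDF) x (hasDerivAt_stdNormalCDF ((x + c) / s)) hu
  have hφ : HasDerivAt (fun x : ℝ => stdNormalPDF ((x + c) / s))
      ((-((x + c) / s) * stdNormalPDF ((x + c) / s)) * (1 / s)) x :=
    (hasDerivAt_stdNormalPDF ((x + c) / s)).comp x hu
  have h1 : HasDerivAt (fun x : ℝ => (a * stdNormalCDF ((x + c) / s) - hc) * (x + c))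
      ((a * (stdNormalPDF ((x + c) / s) * (1 / s))) * (x + c)
        + (a * stdNormalCDF ((x + c) / s) - hc) * 1) x :=
    ((hΦ.const_mul a).sub_const hc).mul ((hasDerivAt_id x).add_const c)
  have h2 := ((hφ.const_mul a).mul_const s)
  have h3 := ((h1.add h2).add_const k)
  have h4 := h3.add ((hasDerivAt_id x).const_mul m)
  have heq : (fun x : ℝ => (a * stdNormalCDF ((x + c) / s) - hc) * (x + c)
        + a * stdNormalPDF ((x + c) / s) * s + m * x + k)
      = (fun x : ℝ => (a * stdNormalCDF ((x + c) / s) - hc) * (x + c)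
        + a * stdNormalPDF ((x + c) / s) * s + k + m * id x) := by
    funext y; simp; ring
  rw [heq]
  exact h4.congr_deriv (by field_simp; ring)

lemma helper_convex (a s hc c m k : ℝ) (ha : 0 ≤ a) (hs : 0 < s) :
    ConvexOn ℝ Set.univ (fun x : ℝ => (a * stdNormalCDF ((x + c) / s) - hc) * (x + c)
        + a * stdNormalPDF ((x + c) / s) * s + m * x + k) := by
  set f : ℝ → ℝ := fun x : ℝ => (a * stdNormalCDF ((x + c) / s) - hc) * (x + c)
        + a * stdNormalPDF ((x + c) / s) * s + m * x + k with hf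
  have hd : ∀ x, HasDerivAt f (a * stdNormalCDF ((x + c) / s) - hc + m) x :=
    helper_hasDerivAt a s hc c m k hs
  have hdiff : Differentiable ℝ f := fun x => (hd x).differentiableAt
  have hderiv : deriv f = fun x => a * stdNormalCDF ((x + c) / s) - hc + m :=
    funext fun x => (hd x).deriv
  apply Monotone.convexOn_univ_of_deriv hdiff
  rw [hderiv]
  intro x y hxy
  have h1 : (x + c) / s ≤ (y + c) / s := by gcongr
  have h2 := monotone_stdNormalCDF h1
  have := mul_le_mul_of_nonneg_left h2 ha
  linarith

/-- The normal-demand newsvendor cost `C_ω(q)` is convex in each mean parameter `μ τ`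
(with all other parameters fixed). -/
theorem stmt_10
    (T : ℕ) (hT : 1 ≤ T)
    (h b p : ℝ) (hh : 0 ≤ h) (hb : 0 ≤ b) (hp : 0 ≤ p)
    (w q σ μv : ℕ → ℝ) (hσ : ∀ t, 1 ≤ t → t ≤ T → 0 < σ t) :
    ∀ τ, 1 ≤ τ → τ ≤ T →
      ConvexOn ℝ Set.univ
        (fun x : ℝ => normalCost T h b p w q σ (Function.update μv τ x)) := by
  intro τ hτ1 hτ2
  set F : ℕ → ℝ → ℝ := fun t x =>
    (((h + b + (if t = T then p else 0))
        * stdNormalCDF ((∑ k ∈ Finset.Icc 1 t, (Function.update μv τ x k - q k))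
            / Real.sqrt (∑ k ∈ Finset.Icc 1 t, (σ k) ^ 2)) - h)
      * (∑ k ∈ Finset.Icc 1 t, (Function.update μv τ x k - q k))
     + (h + b + (if t = T then p else 0))
        * stdNormalPDF ((∑ k ∈ Finset.Icc 1 t, (Function.update μv τ x k - q k))
            / Real.sqrt (∑ k ∈ Finset.Icc 1 t, (σ k) ^ 2))
        * Real.sqrt (∑ k ∈ Finset.Icc 1 t, (σ k) ^ 2)
     + w t * q t - p * Function.update μv τ x t) with hF
  have hkey : ∀ t ∈ Finset.Icc 1 T, ConvexOn ℝ Set.univ (F t) := by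
    intro t hmem
    obtain ⟨ht1, ht2⟩ := Finset.mem_Icc.mp hmem
    set a : ℝ := h + b + (if t = T then p else 0) with haa
    have ha : 0 ≤ a := by
      rw [haa]; positivity
    set s : ℝ := Real.sqrt (∑ k ∈ Finset.Icc 1 t, (σ k) ^ 2) with hss
    have hs : 0 < s := by
      rw [hss]
      apply Real.sqrt_pos.mpr
      apply Finset.sum_pos
      · intro k hk
        obtain ⟨hk1, hk2⟩ := Finset.mem_Icc.mp hk
        exact pow_pos (hσ k hk1 (le_trans hk2 ht2)) 2
      · exact ⟨1, Finset.mem_Icc.mpr ⟨le_refl 1, ht1⟩⟩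
    by_cases hτt : τ ≤ t
    · -- x appears in the cumulative sum
      have hτmem : τ ∈ Finset.Icc 1 t := Finset.mem_Icc.mpr ⟨hτ1, hτt⟩
      set c : ℝ := (∑ k ∈ (Finset.Icc 1 t).erase τ, (μv k - q k)) - q τ with hcc
      have hsum : ∀ x : ℝ,
          (∑ k ∈ Finset.Icc 1 t, (Function.update μv τ x k - q k)) = x + c := by
        intro x
        rw [← Finset.sum_erase_add _ _ hτmem, Function.update_self]
        rw [Finset.sum_congr rfl (fun k hk => by
          rw [Function.update_of_ne (Finset.ne_of_mem_erase hk)])]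
        rw [hcc]; ring
      by_cases htτ : t = τ
      · subst htτ
        have heq : F t = fun x : ℝ => (a * stdNormalCDF ((x + c) / s) - h) * (x + c)
            + a * stdNormalPDF ((x + c) / s) * s + (-p) * x + w t * q t := by
          funext y
          simp only [hF, hsum y, Function.update_self]
          ring
        rw [heq]
        exact helper_convex a s h c (-p) (w t * q t) ha hs
      · have heq : F t = fun x : ℝ => (a * stdNormalCDF ((x + c) / s) - h) * (x + c)
            + a * stdNormalPDF ((x + c) / s) * s + 0 * x + (w t * q t - p * μv t) := by
          funext y
          simp only [hF, hsum y, Function.update_of_ne htτ]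
          ring
        rw [heq]
        exact helper_convex a s h c 0 (w t * q t - p * μv t) ha hs
    · -- t < τ : the summand is constant in x
      push_neg at hτt
      have htτ : t ≠ τ := by omega
      have hτmem : τ ∉ Finset.Icc 1 t := by
        simp only [Finset.mem_Icc, not_and, not_le]
        intro _; exact hτt
      have hsum : ∀ x : ℝ,
          (∑ k ∈ Finset.Icc 1 t, (Function.update μv τ x k - q k))
            = ∑ k ∈ Finset.Icc 1 t, (μv k - q k) := by
        intro x
        exact Finset.sum_congr rfl (fun k hk => by
          rw [Function.update_of_ne (by rintro rfl; exact hτmem hk)])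
      have heq : F t = fun _ : ℝ =>
          ((a * stdNormalCDF ((∑ k ∈ Finset.Icc 1 t, (μv k - q k)) / s) - h)
            * (∑ k ∈ Finset.Icc 1 t, (μv k - q k))
           + a * stdNormalPDF ((∑ k ∈ Finset.Icc 1 t, (μv k - q k)) / s) * s
           + w t * q t - p * μv t) := by
        funext y
        simp only [hF, hsum y, Function.update_of_ne htτ]
        rfl
      rw [heq]
      exact convexOn_const _ convex_univ
  have hsum_fun : (fun x : ℝ => normalCost T h b p w q σ (Function.update μv τ x))
      = fun x : ℝ => ∑ t ∈ Finset.Icc 1 T, F t x := rfl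
  rw [hsum_fun]
  have : ConvexOn ℝ Set.univ (∑ t ∈ Finset.Icc 1 T, F t) := by
    apply Finset.sum_induction F (ConvexOn ℝ Set.univ)
      (fun f g hf hg => hf.add hg) ?_ hkey
    simpa [Pi.zero_def] using convexOn_const (0:ℝ) convex_univ
  have hfun2 : (fun x : ℝ => ∑ t ∈ Finset.Icc 1 T, F t x)
      = ∑ t ∈ Finset.Icc 1 T, F t := by
    funext x; rw [Finset.sum_apply]
  rw [hfun2]
  exact this
end

section
/- Let T ≥ 1, h, b, p ≥ 0, w ∈ ℝ^T, q ∈ ℝ^T, μ ∈ ℝ^T, σ ∈ ℝ_{>0}^T, and define a_t = h + b + p·1{t=T}, s_t = √(Σ_{k=1}^t σ_k²), β_t = (Σ_{k=1}^t (μ_k − q_k))/s_t, and C_ω(q) = Σ_{t=1}^T [ (a_t·Φ(β_t) − h)·Σ_{k=1}^t (μ_k − q_k) + a_t·φ(β_t)·s_t + w_t q_t − p·μ_t ]. Then for every τ ∈ {1,...,T}, the partial derivative of C_ω(q) with respect to σ_τ equals Σ_{t=τ}^T a_t·φ(β_t)·σ_τ/s_t, and this quantity is nonnegative. -/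
open MeasureTheory ProbabilityTheory
open scoped ENNReal NNReal

lemma stdNormalPDF_nonneg (x : ℝ) : 0 ≤ stdNormalPDF x :=
  gaussianPDFReal_nonneg 0 1 x

lemma integrable_stdNormalPDF : Integrable stdNormalPDF :=
  integrable_gaussianPDFReal 0 1

lemma stdNormalPDF_eq (x : ℝ) :
    stdNormalPDF x = (Real.sqrt (2 * Real.pi))⁻¹ * Real.exp (-x ^ 2 / 2) := by
  simp [stdNormalPDF, gaussianPDFReal]

lemma term_hasDerivAt (a hco M A x0 : ℝ) (hA : 0 ≤ A) (hx0 : 0 < x0) :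
    HasDerivAt (fun x : ℝ =>
        (a * stdNormalCDF (M / Real.sqrt (A + x ^ 2)) - hco) * M
        + a * stdNormalPDF (M / Real.sqrt (A + x ^ 2)) * Real.sqrt (A + x ^ 2))
      (a * stdNormalPDF (M / Real.sqrt (A + x0 ^ 2)) * x0 / Real.sqrt (A + x0 ^ 2)) x0 := by
  have hpos : 0 < A + x0 ^ 2 := by positivity
  set s := Real.sqrt (A + x0 ^ 2) with hs_def
  have hs : 0 < s := Real.sqrt_pos.mpr hpos
  have hq : HasDerivAt (fun x : ℝ => A + x ^ 2) (2 * x0) x0 := by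
    simpa using (hasDerivAt_pow 2 x0).const_add A
  have hsqrt : HasDerivAt (fun x : ℝ => Real.sqrt (A + x ^ 2)) (x0 / s) x0 := by
    have h0 := (Real.hasDerivAt_sqrt hpos.ne').comp x0 hq
    have h1 : HasDerivAt (fun x : ℝ => Real.sqrt (A + x ^ 2))
        (1 / (2 * s) * (2 * x0)) x0 := h0
    convert h1 using 1
    field_simp
  have hβ : HasDerivAt (fun x : ℝ => M / Real.sqrt (A + x ^ 2))
      ((0 * s - M * (x0 / s)) / s ^ 2) x0 :=
    (hasDerivAt_const x0 M).div hsqrt hs.ne'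
  have hΦ : HasDerivAt (fun x : ℝ => stdNormalCDF (M / Real.sqrt (A + x ^ 2)))
      (stdNormalPDF (M / s) * ((0 * s - M * (x0 / s)) / s ^ 2)) x0 :=
    (hasDerivAt_stdNormalCDF (M / s)).comp (h := fun x : ℝ => M / Real.sqrt (A + x ^ 2)) x0 hβ
  have hφ : HasDerivAt (fun x : ℝ => stdNormalPDF (M / Real.sqrt (A + x ^ 2)))
      ((-(M / s) * stdNormalPDF (M / s)) * ((0 * s - M * (x0 / s)) / s ^ 2)) x0 :=
    (hasDerivAt_stdNormalPDF (M / s)).comp (h := fun x : ℝ => M / Real.sqrt (A + x ^ 2)) x0 hβ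
  have h1 := ((hΦ.const_mul a).sub_const hco).mul_const M
  have h2 := (hφ.const_mul a).mul hsqrt
  refine (h1.add h2).congr_deriv ?_
  set P := stdNormalPDF (M / s)
  field_simp
  ring

/-- The partial derivative of the normal-demand newsvendor cost `C_ω(q)` with respect to
`σ τ` equals `∑_{t=τ}^T a t * φ(β t) * σ τ / s t`, and this quantity is nonnegative. -/
theorem stmt_11
    (T : ℕ) (hT : 1 ≤ T)
    (h b p : ℝ) (hh : 0 ≤ h) (hb : 0 ≤ b) (hp : 0 ≤ p)
    (w q μv σ : ℕ → ℝ) (hσ : ∀ t, 1 ≤ t → t ≤ T → 0 < σ t) :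
    ∀ τ, 1 ≤ τ → τ ≤ T →
      HasDerivAt (fun x : ℝ => normalCost T h b p w q (Function.update σ τ x) μv)
        (∑ t ∈ Finset.Icc τ T,
          (h + b + (if t = T then p else 0))
            * stdNormalPDF ((∑ k ∈ Finset.Icc 1 t, (μv k - q k))
                / Real.sqrt (∑ k ∈ Finset.Icc 1 t, (σ k) ^ 2))
            * σ τ / Real.sqrt (∑ k ∈ Finset.Icc 1 t, (σ k) ^ 2))
        (σ τ) ∧
      0 ≤ ∑ t ∈ Finset.Icc τ T,
          (h + b + (if t = T then p else 0))
            * stdNormalPDF ((∑ k ∈ Finset.Icc 1 t, (μv k - q k))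
                / Real.sqrt (∑ k ∈ Finset.Icc 1 t, (σ k) ^ 2))
            * σ τ / Real.sqrt (∑ k ∈ Finset.Icc 1 t, (σ k) ^ 2) := by
  intro τ hτ1 hτT
  have hστ : 0 < σ τ := hσ τ hτ1 hτT
  have ha : ∀ t : ℕ, 0 ≤ h + b + (if t = T then p else 0) := by
    intro t; split <;> linarith
  -- notation shortcuts
  set g : ℕ → ℝ := fun t =>
      (h + b + (if t = T then p else 0))
        * stdNormalPDF ((∑ k ∈ Finset.Icc 1 t, (μv k - q k))
            / Real.sqrt (∑ k ∈ Finset.Icc 1 t, (σ k) ^ 2))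
        * σ τ / Real.sqrt (∑ k ∈ Finset.Icc 1 t, (σ k) ^ 2) with hg
  constructor
  · -- derivative
    have key : ∀ t ∈ Finset.Icc 1 T,
        HasDerivAt (fun x : ℝ =>
          ((h + b + (if t = T then p else 0))
              * stdNormalCDF ((∑ k ∈ Finset.Icc 1 t, (μv k - q k))
                  / Real.sqrt (∑ k ∈ Finset.Icc 1 t, (Function.update σ τ x k) ^ 2)) - h)
            * (∑ k ∈ Finset.Icc 1 t, (μv k - q k))
          + (h + b + (if t = T then p else 0))
              * stdNormalPDF ((∑ k ∈ Finset.Icc 1 t, (μv k - q k))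
                  / Real.sqrt (∑ k ∈ Finset.Icc 1 t, (Function.update σ τ x k) ^ 2))
              * Real.sqrt (∑ k ∈ Finset.Icc 1 t, (Function.update σ τ x k) ^ 2)
          + w t * q t - p * μv t)
          (if τ ≤ t then g t else 0) (σ τ) := by
      intro t ht
      simp only [Finset.mem_Icc] at ht
      by_cases hτt : τ ≤ t
      · -- t ≥ τ : actual dependence
        rw [if_pos hτt]
        have hmem : τ ∈ Finset.Icc 1 t := Finset.mem_Icc.mpr ⟨hτ1, hτt⟩
        have hsum : ∀ x : ℝ, (∑ k ∈ Finset.Icc 1 t, (Function.update σ τ x k) ^ 2)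
            = (∑ k ∈ (Finset.Icc 1 t).erase τ, (σ k) ^ 2) + x ^ 2 := by
          intro x
          rw [← Finset.sum_erase_add _ _ hmem, Function.update_self]
          congr 1
          exact Finset.sum_congr rfl fun k hk => by
            rw [Function.update_of_ne (Finset.ne_of_mem_erase hk)]
        have hval : (∑ k ∈ (Finset.Icc 1 t).erase τ, (σ k) ^ 2) + (σ τ) ^ 2
            = ∑ k ∈ Finset.Icc 1 t, (σ k) ^ 2 := by
          rw [← Finset.sum_erase_add _ _ hmem]
        have hA : 0 ≤ ∑ k ∈ (Finset.Icc 1 t).erase τ, (σ k) ^ 2 :=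
          Finset.sum_nonneg fun k _ => sq_nonneg _
        simp only [hsum]
        have hderiv := ((term_hasDerivAt (h + b + (if t = T then p else 0)) h
            (∑ k ∈ Finset.Icc 1 t, (μv k - q k))
            (∑ k ∈ (Finset.Icc 1 t).erase τ, (σ k) ^ 2) (σ τ) hA hστ).add_const
            (w t * q t)).sub_const (p * μv t)
        rw [hval] at hderiv
        convert hderiv using 2 <;> ring
      · -- t < τ : constant
        rw [if_neg hτt]
        have hsum : ∀ x : ℝ, (∑ k ∈ Finset.Icc 1 t, (Function.update σ τ x k) ^ 2)
            = ∑ k ∈ Finset.Icc 1 t, (σ k) ^ 2 := by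
          intro x
          refine Finset.sum_congr rfl fun k hk => ?_
          simp only [Finset.mem_Icc] at hk
          rw [Function.update_of_ne (by omega)]
        simp only [hsum]
        exact hasDerivAt_const _ _
    have hsumderiv := HasDerivAt.fun_sum key
    have hring : (∑ t ∈ Finset.Icc 1 T, (if τ ≤ t then g t else 0))
        = ∑ t ∈ Finset.Icc τ T, g t := by
      rw [← Finset.sum_filter]
      congr 1
      ext a
      simp only [Finset.mem_filter, Finset.mem_Icc]
      omega
    rw [hring] at hsumderiv
    exact hsumderiv
  · refine Finset.sum_nonneg fun t _ => ?_
    exact div_nonneg (mul_nonneg (mul_nonneg (ha t) (stdNormalPDF_nonneg _)) hστ.le)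
      (Real.sqrt_nonneg _)
end

section
/- Let T ≥ 1, h, b, p ≥ 0, w ∈ ℝ^T, q ∈ ℝ^T, μ ∈ ℝ^T, and fix σ_k > 0 for all k ≠ τ. Define a_t = h + b + p·1{t=T}, s_t = √(Σ_{k=1}^t σ_k²), β_t = (Σ_{k=1}^t (μ_k − q_k))/s_t, and C_ω(q) = Σ_{t=1}^T [ (a_t·Φ(β_t) − h)·Σ_{k=1}^t (μ_k − q_k) + a_t·φ(β_t)·s_t + w_t q_t − p·μ_t ]. Then for every τ ∈ {1,...,T}, the function σ_τ ↦ C_ω(q) is monotone nondecreasing on (0, ∞). -/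
open MeasureTheory ProbabilityTheory
open scoped ENNReal NNReal

lemma hasDerivAt_term (a hc m S : ℝ) {x : ℝ} (hS : 0 ≤ S) (hx : 0 < x) :
    HasDerivAt (fun y : ℝ =>
        (a * stdNormalCDF (m / Real.sqrt (S + y^2)) - hc) * m
          + a * stdNormalPDF (m / Real.sqrt (S + y^2)) * Real.sqrt (S + y^2))
      (a * stdNormalPDF (m / Real.sqrt (S + x^2)) * (x / Real.sqrt (S + x^2))) x := by
  have hpos : 0 < S + x^2 := by positivity
  set s : ℝ := Real.sqrt (S + x^2) with hs
  have hspos : 0 < s := Real.sqrt_pos.mpr hpos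
  have hsne : s ≠ 0 := ne_of_gt hspos
  have hs2 : s ^ 2 = S + x^2 := Real.sq_sqrt hpos.le
  -- derivative of y ↦ sqrt (S + y^2)
  have hinner : HasDerivAt (fun y : ℝ => S + y^2) (2 * x) x := by
    simpa using (hasDerivAt_pow 2 x).const_add S
  have hsqrt : HasDerivAt (fun y : ℝ => Real.sqrt (S + y^2)) (x / s) x := by
    have := hinner.sqrt (ne_of_gt hpos)
    convert this using 1
    rw [← hs]; field_simp
  -- derivative of y ↦ m / sqrt (S + y^2)
  have hu : HasDerivAt (fun y : ℝ => m / Real.sqrt (S + y^2)) (-(m * (x / s)) / s^2) x := by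
    have := (hasDerivAt_const x m).fun_div hsqrt hsne
    refine this.congr_deriv ?_
    rw [← hs]; field_simp; ring
  have hΦ : HasDerivAt (fun y : ℝ => stdNormalCDF (m / Real.sqrt (S + y^2)))
      (stdNormalPDF (m / s) * (-(m * (x / s)) / s^2)) x :=
    by have := (hasDerivAt_stdNormalCDF (m / s)).comp x hu; exact this
  have hφ : HasDerivAt (fun y : ℝ => stdNormalPDF (m / Real.sqrt (S + y^2)))
      (-(m / s) * stdNormalPDF (m / s) * (-(m * (x / s)) / s^2)) x :=
    (hasDerivAt_stdNormalPDF (m / Real.sqrt (S + x^2))).comp x hu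
  have hfull := (((hΦ.const_mul a).sub_const hc).mul_const m).add
    (((hφ.const_mul a).mul hsqrt))
  refine hfull.congr_deriv ?_
  rw [← hs]
  field_simp
  ring

/-- The normal-demand newsvendor cost `C_ω(q)` is monotone nondecreasing in each standard
deviation parameter `σ τ` on `(0, ∞)` (with all other parameters fixed). -/
theorem stmt_12
    (T : ℕ) (hT : 1 ≤ T)
    (h b p : ℝ) (hh : 0 ≤ h) (hb : 0 ≤ b) (hp : 0 ≤ p)
    (w q μv σ : ℕ → ℝ) :
    ∀ τ, 1 ≤ τ → τ ≤ T →
      (∀ k, k ≠ τ → 1 ≤ k → k ≤ T → 0 < σ k) →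
      MonotoneOn (fun x : ℝ => normalCost T h b p w q (Function.update σ τ x) μv)
        (Set.Ioi (0 : ℝ)) := by
  intro τ hτ1 hτT hσ
  set A : ℕ → ℝ := fun t => h + b + (if t = T then p else 0) with hA
  set M : ℕ → ℝ := fun t => ∑ k ∈ Finset.Icc 1 t, (μv k - q k) with hM
  set S : ℕ → ℝ := fun t => ∑ k ∈ (Finset.Icc 1 t).erase τ, σ k ^ 2 with hS
  have hSnn : ∀ t, 0 ≤ S t := fun t => Finset.sum_nonneg fun k _ => sq_nonneg _
  have hAnn : ∀ t, 0 ≤ A t := by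
    intro t; simp only [hA]
    have : (0:ℝ) ≤ (if t = T then p else 0) := by positivity
    linarith
  have hsum_ge : ∀ (x : ℝ) (t : ℕ), τ ≤ t →
      ∑ k ∈ Finset.Icc 1 t, (Function.update σ τ x k) ^ 2 = S t + x ^ 2 := by
    intro x t htt
    have hmem : τ ∈ Finset.Icc 1 t := Finset.mem_Icc.mpr ⟨hτ1, htt⟩
    rw [← Finset.sum_erase_add _ _ hmem, Function.update_self, hS]
    congr 1
    refine Finset.sum_congr rfl fun k hk => ?_
    rw [Function.update_of_ne (Finset.ne_of_mem_erase hk)]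
  have hsum_lt : ∀ (x : ℝ) (t : ℕ), t < τ →
      ∑ k ∈ Finset.Icc 1 t, (Function.update σ τ x k) ^ 2
        = ∑ k ∈ Finset.Icc 1 t, σ k ^ 2 := by
    intro x t htt
    refine Finset.sum_congr rfl fun k hk => ?_
    have : k ≠ τ := by
      have := (Finset.mem_Icc.mp hk).2; omega
    rw [Function.update_of_ne this]
  set D : ℝ → ℝ := fun x => ∑ t ∈ Finset.Icc 1 T,
      if τ ≤ t then
        A t * stdNormalPDF (M t / Real.sqrt (S t + x ^ 2)) * (x / Real.sqrt (S t + x ^ 2))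
      else 0 with hD
  have key : ∀ x ∈ Set.Ioi (0:ℝ),
      HasDerivAt (fun x : ℝ => normalCost T h b p w q (Function.update σ τ x) μv) (D x) x := by
    intro x hx
    have hx0 : 0 < x := hx
    unfold normalCost
    rw [hD]
    apply HasDerivAt.fun_sum
    intro t _
    by_cases hτt : τ ≤ t
    · simp only [if_pos hτt,
        show ∀ y : ℝ, ∑ k ∈ Finset.Icc 1 t, (Function.update σ τ y k) ^ 2 = S t + y ^ 2
          from fun y => hsum_ge y t hτt]
      exact ((hasDerivAt_term (A t) h (M t) (S t) (hSnn t) hx0).add_const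
        (w t * q t)).sub_const (p * μv t)
    · simp only [if_neg hτt,
        show ∀ y : ℝ, ∑ k ∈ Finset.Icc 1 t, (Function.update σ τ y k) ^ 2
            = ∑ k ∈ Finset.Icc 1 t, σ k ^ 2
          from fun y => hsum_lt y t (by omega)]
      exact hasDerivAt_const _ _
  have hDnn : ∀ x ∈ Set.Ioi (0:ℝ), 0 ≤ D x := by
    intro x hx
    refine Finset.sum_nonneg fun t _ => ?_
    split
    · have hx0 : (0:ℝ) < x := hx
      have h1 : 0 ≤ x / Real.sqrt (S t + x ^ 2) := by positivity
      exact mul_nonneg (mul_nonneg (hAnn t) (stdNormalPDF_nonneg _)) h1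
    · exact le_rfl
  refine monotoneOn_of_deriv_nonneg (convex_Ioi 0)
    (fun x hx => (key x hx).continuousAt.continuousWithinAt) ?_ ?_
  · intro x hx
    rw [interior_Ioi] at hx
    exact (key x hx).differentiableAt.differentiableWithinAt
  · intro x hx
    rw [interior_Ioi] at hx
    rw [(key x hx).deriv]
    exact hDnn x hx
end

section
/- Let T ≥ 1, let h, b, p ≥ 0 and w ∈ ℝ^T, let q ∈ ℕ^T, and let X_1,...,X_T be independent Poisson random variables with rates λ_1,...,λ_T > 0. Define I_t = Σ_{k=1}^t (q_k − X_k), I_t^+ = max(I_t, 0), I_t^− = max(−I_t, 0), Q_t = Σ_{k=1}^t q_k, Λ_t = Σ_{k=1}^t λ_k, a_t = h + b + p·1{t=T}, and let F̃_t be the CDF of the Poisson distribution with rate Λ_t (with F̃_t(−1) = 0). Then the expected cost p·E[I_T^−] + Σ_{t=1}^T ( h·E[I_t^+] + b·E[I_t^−] + w_t q_t − p·λ_t ) equals Σ_{t=1}^T [ a_t·Q_t·F̃_t(Q_t) − Λ_t·a_t·F̃_t(Q_t − 1) + (b + p·1{t=T})·(Λ_t − Q_t) + w_t q_t − p·λ_t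 ]. -/
open MeasureTheory ProbabilityTheory Real
open scoped ENNReal NNReal


lemma nv_meas_nat {α : Type*} [MeasurableSpace α] (f : ℕ → α) : Measurable f :=
  measurable_from_top

lemma nv_pmf_succ (r : ℝ≥0) (n : ℕ) :
    ((n : ℝ) + 1) * poissonPMFReal r (n + 1) = (r : ℝ) * poissonPMFReal r n := by
  unfold poissonPMFReal
  rw [Nat.factorial_succ]
  push_cast
  have h1 : ((n : ℝ) + 1) ≠ 0 := by positivity
  have h2 : ((n.factorial : ℝ)) ≠ 0 := by positivity
  field_simp
  ring

lemma nv_hasSum_id (r : ℝ≥0) :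
    HasSum (fun n : ℕ => (n : ℝ) * poissonPMFReal r n) r := by
  have hg : HasSum (fun n : ℕ => (r : ℝ) * poissonPMFReal r n) ((r:ℝ) * 1) :=
    (poissonPMFRealSum r).mul_left _
  have hshift : (fun n : ℕ => ((n:ℕ)+1 : ℕ) * poissonPMFReal r (n+1) : ℕ → ℝ)
      = fun n : ℕ => (r : ℝ) * poissonPMFReal r n := by
    ext n; push_cast; exact nv_pmf_succ r n
  have : HasSum (fun n : ℕ => ((n+1 : ℕ) : ℝ) * poissonPMFReal r (n+1)) ((r:ℝ)) := by
    rw [show (fun n : ℕ => ((n+1 : ℕ) : ℝ) * poissonPMFReal r (n+1)) = fun n : ℕ => (r : ℝ) * poissonPMFReal r n by ext n; push_cast; exact nv_pmf_succ r n]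
    simpa using hg
  have := (hasSum_nat_add_iff (f := fun n : ℕ => (n : ℝ) * poissonPMFReal r n) 1).mp (by simpa using this)
  simpa using this


lemma nv_pmf_conv (a b : ℝ≥0) (n : ℕ) :
    poissonPMFReal (a + b) n
      = ∑ k ∈ Finset.range (n + 1), poissonPMFReal a k * poissonPMFReal b (n - k) := by
  unfold poissonPMFReal
  have hab : ((a + b : ℝ≥0) : ℝ) = (a : ℝ) + b := by push_cast; ring
  rw [hab, add_pow, mul_comm, Finset.sum_mul, Finset.sum_div]
  apply Finset.sum_congr rfl
  intro k hk
  rw [Finset.mem_range, Nat.lt_succ_iff] at hk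
  have hfacn : (n.choose k) * k.factorial * (n - k).factorial = n.factorial :=
    Nat.choose_mul_factorial_mul_factorial hk
  have hfac : ((n.choose k) : ℝ) * k.factorial * (n - k).factorial = n.factorial := by
    exact_mod_cast congrArg (Nat.cast (R := ℝ)) hfacn
  have hexp : rexp (-((a : ℝ) + b)) = rexp (-(a:ℝ)) * rexp (-(b:ℝ)) := by
    rw [← Real.exp_add]; ring_nf
  rw [hexp]
  have h1 : (k.factorial : ℝ) ≠ 0 := by positivity
  have h2 : ((n - k).factorial : ℝ) ≠ 0 := by positivity
  have h3 : (n.factorial : ℝ) ≠ 0 := by positivity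
  field_simp
  rw [← hfac]
  ring


lemma nv_poisson_singleton (r : ℝ≥0) (n : ℕ) :
    poissonMeasure r {n} = ENNReal.ofReal (poissonPMFReal r n) := by
  rw [poissonMeasure_singleton]
  rfl

lemma nv_map_add_poisson {Ω : Type*} [MeasurableSpace Ω] (P : Measure Ω)
    [IsProbabilityMeasure P] {Y Z : Ω → ℕ} (hY : Measurable Y) (hZ : Measurable Z)
    (hind : IndepFun Y Z P) {a b : ℝ≥0}
    (ha : P.map Y = poissonMeasure a) (hb : P.map Z = poissonMeasure b) :
    P.map (fun ω => Y ω + Z ω) = poissonMeasure (a + b) := by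
  apply MeasureTheory.Measure.ext_of_singleton
  intro n
  rw [Measure.map_apply (f := fun ω => Y ω + Z ω) (hY.add hZ) (measurableSet_singleton n), nv_poisson_singleton]
  have hset : (fun ω => Y ω + Z ω) ⁻¹' {n}
      = ⋃ k ∈ Finset.range (n+1), (Y ⁻¹' {k} ∩ Z ⁻¹' {n - k}) := by
    ext ω
    simp only [Set.mem_preimage, Set.mem_singleton_iff, Finset.mem_range, Set.mem_iUnion,
      Set.mem_inter_iff, Nat.lt_succ_iff]
    constructor
    · rintro rfl
      exact ⟨Y ω, Nat.le_add_right _ _, rfl, by omega⟩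
    · rintro ⟨k, hk, h1, h2⟩
      omega
  rw [hset, measure_biUnion_finset]
  · have hterm : ∀ k ∈ Finset.range (n+1),
        P (Y ⁻¹' {k} ∩ Z ⁻¹' {n - k})
          = ENNReal.ofReal (poissonPMFReal a k * poissonPMFReal b (n - k)) := by
      intro k _
      rw [(indepFun_iff_measure_inter_preimage_eq_mul.mp hind) {k} {n-k}
        (measurableSet_singleton _) (measurableSet_singleton _)]
      rw [← Measure.map_apply hY (measurableSet_singleton _),
          ← Measure.map_apply hZ (measurableSet_singleton _), ha, hb,
          nv_poisson_singleton, nv_poisson_singleton,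
          ← ENNReal.ofReal_mul poissonPMFReal_nonneg]
    rw [Finset.sum_congr rfl hterm, ← ENNReal.ofReal_sum_of_nonneg
      (fun k _ => mul_nonneg poissonPMFReal_nonneg poissonPMFReal_nonneg), nv_pmf_conv]
  · intro i _ j _ hij
    apply Set.disjoint_left.mpr
    rintro ω ⟨h1, _⟩ ⟨h3, _⟩
    exact hij (h1.symm.trans h3)
  · intro k _
    exact (hY (measurableSet_singleton _)).inter (hZ (measurableSet_singleton _))


lemma nv_pmf_apply (r : ℝ≥0) (n : ℕ) :
    poissonPMF r n = ENNReal.ofReal (poissonPMFReal r n) := rfl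

lemma nv_pmf_toReal (r : ℝ≥0) (n : ℕ) : (poissonPMF r n).toReal = poissonPMFReal r n := by
  rw [nv_pmf_apply, ENNReal.toReal_ofReal poissonPMFReal_nonneg]

lemma nv_integral_eq (r : ℝ≥0) (f : ℕ → ℝ) :
    ∫ n, f n ∂(poissonMeasure r) = ∑' n, (poissonPMF r n).toReal • f n := by
  rw [integral_poissonMeasure]
  congr with n
  rw [nv_pmf_toReal]
  rfl

lemma nv_integrable_bounded (r : ℝ≥0) (f : ℕ → ℝ) (C : ℝ) (hC : ∀ n, |f n| ≤ C) :
    Integrable f (poissonMeasure r) := by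
  refine Integrable.mono' (integrable_const C) ((nv_meas_nat f).aestronglyMeasurable) ?_
  exact Filter.Eventually.of_forall (fun n => by simpa [Real.norm_eq_abs] using hC n)

lemma nv_hasSum_id' (r : ℝ≥0) :
    HasSum (fun n : ℕ => (n : ℝ) * poissonPMFReal r n) r := nv_hasSum_id r

lemma nv_integrable_id (r : ℝ≥0) :
    Integrable (fun n : ℕ => (n : ℝ)) (poissonMeasure r) := by
  constructor
  · exact (nv_meas_nat _).aestronglyMeasurable
  · rw [hasFiniteIntegral_iff_norm]
    have : ∀ n : ℕ, ENNReal.ofReal ‖(n:ℝ)‖ = ENNReal.ofReal ((n:ℝ)) := by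
      intro n; rw [Real.norm_eq_abs, abs_of_nonneg (show (0:ℝ) ≤ (n:ℝ) by positivity)]
    simp_rw [this]
    rw [MeasureTheory.lintegral_countable' (fun n : ℕ => ENNReal.ofReal ((n:ℝ)))]
    have hsingle : ∀ n : ℕ, poissonMeasure r {n} = ENNReal.ofReal (poissonPMFReal r n) := by
      intro n
      rw [poissonMeasure_singleton]; rfl
    calc ∑' n : ℕ, ENNReal.ofReal ((n:ℝ)) * poissonMeasure r {n}
        = ∑' n : ℕ, ENNReal.ofReal ((n:ℝ) * poissonPMFReal r n) := by
          refine tsum_congr fun n => ?_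
          rw [hsingle, ← ENNReal.ofReal_mul (Nat.cast_nonneg n)]
      _ = ENNReal.ofReal r := by
          rw [← ENNReal.ofReal_tsum_of_nonneg
            (fun n => mul_nonneg (Nat.cast_nonneg n) poissonPMFReal_nonneg)
            (nv_hasSum_id' r).summable, (nv_hasSum_id' r).tsum_eq]
      _ < ⊤ := ENNReal.ofReal_lt_top

lemma nv_integral_id (r : ℝ≥0) :
    ∫ n : ℕ, (n : ℝ) ∂(poissonMeasure r) = r := by
  rw [nv_integral_eq]
  have : ∀ n : ℕ, (poissonPMF r n).toReal • (n:ℝ) = (n:ℝ) * poissonPMFReal r n := by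
    intro n; rw [nv_pmf_toReal, smul_eq_mul, mul_comm]
  simp_rw [this]
  exact (nv_hasSum_id' r).tsum_eq

lemma nv_integrable_Epos (r : ℝ≥0) (Q : ℕ) :
    Integrable (fun n : ℕ => max ((Q:ℝ) - (n:ℝ)) 0) (poissonMeasure r) := by
  refine nv_integrable_bounded r _ (Q:ℝ) (fun n => ?_)
  rw [abs_of_nonneg (le_max_right _ _)]
  rcases le_total ((Q:ℝ) - (n:ℝ)) 0 with hc | hc
  · rw [max_eq_right hc]; positivity
  · rw [max_eq_left hc]; have : (0:ℝ) ≤ (n:ℝ) := by positivity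
    linarith

lemma nv_Epos (r : ℝ≥0) (Q : ℕ) :
    ∫ n : ℕ, max ((Q:ℝ) - (n:ℝ)) 0 ∂(poissonMeasure r)
      = (Q:ℝ) * (∑ x ∈ Finset.range (Q+1), poissonPMFReal r x)
        - (r:ℝ) * (∑ x ∈ Finset.range Q, poissonPMFReal r x) := by
  rw [nv_integral_eq]
  have hz : ∀ n ∉ Finset.range (Q+1),
      (poissonPMF r n).toReal • max ((Q:ℝ) - (n:ℝ)) 0 = 0 := by
    intro n hn
    rw [Finset.mem_range, Nat.lt_succ_iff, not_le] at hn
    have : max ((Q:ℝ) - (n:ℝ)) 0 = 0 := max_eq_right (by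
      have : (Q:ℝ) ≤ (n:ℝ) := by exact_mod_cast hn.le
      linarith)
    rw [this, smul_zero]
  rw [tsum_eq_sum hz]
  have hterm : ∀ n ∈ Finset.range (Q+1),
      (poissonPMF r n).toReal • max ((Q:ℝ) - (n:ℝ)) 0
        = (Q:ℝ) * poissonPMFReal r n - (n:ℝ) * poissonPMFReal r n := by
    intro n hn
    rw [Finset.mem_range, Nat.lt_succ_iff] at hn
    rw [nv_pmf_toReal, smul_eq_mul, max_eq_left (by
      have : (n:ℝ) ≤ (Q:ℝ) := by exact_mod_cast hn
      linarith)]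
    ring
  rw [Finset.sum_congr rfl hterm, Finset.sum_sub_distrib, ← Finset.mul_sum]
  congr 1
  rw [Finset.sum_range_succ' (fun n => (n:ℝ) * poissonPMFReal r n) Q]
  simp only [Nat.cast_zero, zero_mul, add_zero]
  rw [Finset.mul_sum]
  apply Finset.sum_congr rfl
  intro k _
  push_cast
  exact nv_pmf_succ r k

lemma nv_Eneg (r : ℝ≥0) (Q : ℕ) :
    ∫ n : ℕ, max ((n:ℝ) - (Q:ℝ)) 0 ∂(poissonMeasure r)
      = ((Q:ℝ) * (∑ x ∈ Finset.range (Q+1), poissonPMFReal r x)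
        - (r:ℝ) * (∑ x ∈ Finset.range Q, poissonPMFReal r x)) + ((r:ℝ) - (Q:ℝ)) := by
  have hid : ∀ n : ℕ, max ((n:ℝ) - (Q:ℝ)) 0
      = max ((Q:ℝ) - (n:ℝ)) 0 - ((Q:ℝ) - (n:ℝ)) := by
    intro n
    rcases le_total ((n:ℝ)) ((Q:ℝ)) with hc | hc
    · rw [max_eq_right (by linarith), max_eq_left (by linarith)]; ring
    · rw [max_eq_left (by linarith), max_eq_right (by linarith)]; ring
  simp_rw [hid]
  have h2 : Integrable (fun n : ℕ => (Q:ℝ) - (n:ℝ)) (poissonMeasure r) := by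
    exact (integrable_const ((Q:ℝ))).sub (nv_integrable_id r)
  rw [integral_sub (nv_integrable_Epos r Q) h2,
    integral_sub (integrable_const ((Q:ℝ))) (nv_integrable_id r),
    integral_const, nv_integral_id, nv_Epos]
  simp [measure_univ]
  ring

lemma nv_map_S {Ω : Type*} [MeasurableSpace Ω] (P : Measure Ω) [IsProbabilityMeasure P]
    (T : ℕ) (lam : ℕ → ℝ≥0) (X : ℕ → Ω → ℕ)
    (hX : ∀ t, 1 ≤ t → t ≤ T → Measurable (X t))
    (hindep : iIndepFun
      (fun i : Fin T => X (i + 1)) P)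
    (hlaw : ∀ t, 1 ≤ t → t ≤ T → P.map (X t) = poissonMeasure (lam t)) :
    ∀ t, 1 ≤ t → t ≤ T →
      P.map (fun ω => ∑ k ∈ Finset.Icc 1 t, X k ω)
        = poissonMeasure (∑ k ∈ Finset.Icc 1 t, lam k) := by
  intro t
  induction t with
  | zero => omega
  | succ t ih =>
    intro _ htT
    rcases Nat.eq_zero_or_pos t with rfl | ht
    · simpa using hlaw 1 le_rfl htT
    -- t ≥ 1
    have htT' : t ≤ T := by omega
    have hins : Finset.Icc 1 (t+1) = insert (t+1) (Finset.Icc 1 t) := by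
      ext x; simp only [Finset.mem_Icc, Finset.mem_insert]; omega
    have hSmeas : Measurable (fun ω => ∑ k ∈ Finset.Icc 1 t, X k ω) := by
      apply Finset.measurable_sum
      intro k hk
      rw [Finset.mem_Icc] at hk
      exact hX k hk.1 (by omega)
    have htltT : t < T := by omega
    set i₀ : Fin T := ⟨t, htltT⟩ with hi₀
    set s : Finset (Fin T) := Finset.univ.filter (fun i : Fin T => (i : ℕ) < t) with hs
    have hmeas : ∀ i : Fin T, Measurable (X (↑i + 1)) := by
      intro i
      exact hX _ (by omega) (by have := i.isLt; omega)
    have hnotmem : i₀ ∉ s := by simp [hs, hi₀]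
    have hindS := (hindep.indepFun_finsetSum_of_notMem hmeas hnotmem).symm
    have hfun : (∑ j ∈ s, (fun ω => X (↑j + 1) ω)) = (fun ω => ∑ k ∈ Finset.Icc 1 t, X k ω) := by
      funext ω
      rw [Finset.sum_apply]
      have himg : Finset.Icc 1 t = s.image (fun i : Fin T => (i : ℕ) + 1) := by
        ext k
        simp only [Finset.mem_Icc, Finset.mem_image, hs, Finset.mem_filter, Finset.mem_univ,
          true_and]
        constructor
        · rintro ⟨h1, h2⟩
          exact ⟨⟨k - 1, by omega⟩, by simp; omega, by simp; omega⟩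
        · rintro ⟨i, hi, rfl⟩
          omega
      rw [himg, Finset.sum_image (fun i _ j _ h => Fin.ext (by omega))]
    rw [hfun] at hindS
    have hIH := ih ht htT'
    have := nv_map_add_poisson P (hX (t+1) (by omega) htT) hSmeas hindS
      (hlaw (t+1) (by omega) htT) hIH
    have hfun2 : (fun ω => ∑ k ∈ Finset.Icc 1 (t+1), X k ω)
        = fun ω => X (t+1) ω + ∑ k ∈ Finset.Icc 1 t, X k ω := by
      funext ω; rw [hins, Finset.sum_insert (by simp)]
    rw [hfun2, hins, Finset.sum_insert (by simp)]
    exact this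

/-- Closed form of the expected cost of the static multi-period newsvendor problem under
independent Poisson demands `X t ~ Pois(λ t)`, where `F̃ t` is the CDF of the Poisson
distribution with rate `Λ t = ∑_{k=1}^t λ k`. -/
theorem stmt_16
    {Ω : Type*} [MeasurableSpace Ω] (P : Measure Ω) [IsProbabilityMeasure P]
    (T : ℕ) (hT : 1 ≤ T)
    (h b p : ℝ) (hh : 0 ≤ h) (hb : 0 ≤ b) (hp : 0 ≤ p)
    (w : ℕ → ℝ) (q : ℕ → ℕ)
    (lam : ℕ → ℝ≥0) (hlam : ∀ t, 1 ≤ t → t ≤ T → 0 < lam t)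
    (X : ℕ → Ω → ℕ) (hX : ∀ t, 1 ≤ t → t ≤ T → Measurable (X t))
    (hindep : iIndepFun
      (fun i : Fin T => X (i + 1)) P)
    (hlaw : ∀ t, 1 ≤ t → t ≤ T → P.map (X t) = poissonMeasure (lam t)) :
    p * (∫ ω, max (-(∑ k ∈ Finset.Icc 1 T, ((q k : ℝ) - (X k ω : ℝ)))) 0 ∂P)
      + ∑ t ∈ Finset.Icc 1 T,
          (h * (∫ ω, max (∑ k ∈ Finset.Icc 1 t, ((q k : ℝ) - (X k ω : ℝ))) 0 ∂P)
            + b * (∫ ω, max (-(∑ k ∈ Finset.Icc 1 t, ((q k : ℝ) - (X k ω : ℝ)))) 0 ∂P)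
            + w t * (q t : ℝ) - p * (lam t : ℝ))
    = ∑ t ∈ Finset.Icc 1 T,
        ((h + b + (if t = T then p else 0)) * ((∑ k ∈ Finset.Icc 1 t, q k : ℕ) : ℝ)
            * (∑ x ∈ Finset.range ((∑ k ∈ Finset.Icc 1 t, q k) + 1),
                poissonPMFReal (∑ k ∈ Finset.Icc 1 t, lam k) x)
         - ((∑ k ∈ Finset.Icc 1 t, lam k : ℝ≥0) : ℝ)
            * (h + b + (if t = T then p else 0))
            * (∑ x ∈ Finset.range (∑ k ∈ Finset.Icc 1 t, q k),
                poissonPMFReal (∑ k ∈ Finset.Icc 1 t, lam k) x)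
         + (b + (if t = T then p else 0))
            * (((∑ k ∈ Finset.Icc 1 t, lam k : ℝ≥0) : ℝ)
                - ((∑ k ∈ Finset.Icc 1 t, q k : ℕ) : ℝ))
         + w t * (q t : ℝ) - p * (lam t : ℝ)) := by
  have hSmeas : ∀ t, t ≤ T → Measurable (fun ω => ∑ k ∈ Finset.Icc 1 t, X k ω) := by
    intro t htT
    apply Finset.measurable_sum
    intro k hk
    rw [Finset.mem_Icc] at hk
    exact hX k hk.1 (by omega)
  have hmapS := nv_map_S P T lam X hX hindep hlaw
  have hcast : ∀ t, ∀ ω, (∑ k ∈ Finset.Icc 1 t, ((q k : ℝ) - (X k ω : ℝ)))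
      = ((∑ k ∈ Finset.Icc 1 t, q k : ℕ) : ℝ)
        - ((∑ k ∈ Finset.Icc 1 t, X k ω : ℕ) : ℝ) := by
    intro t ω
    rw [Finset.sum_sub_distrib]
    push_cast
    ring
  have hEpos : ∀ t, 1 ≤ t → t ≤ T →
      (∫ ω, max (∑ k ∈ Finset.Icc 1 t, ((q k : ℝ) - (X k ω : ℝ))) 0 ∂P)
        = ((∑ k ∈ Finset.Icc 1 t, q k : ℕ) : ℝ)
            * (∑ x ∈ Finset.range ((∑ k ∈ Finset.Icc 1 t, q k) + 1),
                poissonPMFReal (∑ k ∈ Finset.Icc 1 t, lam k) x)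
          - ((∑ k ∈ Finset.Icc 1 t, lam k : ℝ≥0) : ℝ)
            * (∑ x ∈ Finset.range (∑ k ∈ Finset.Icc 1 t, q k),
                poissonPMFReal (∑ k ∈ Finset.Icc 1 t, lam k) x) := by
    intro t h1 h2
    simp_rw [hcast t]
    have hmap := integral_map (μ := P) (φ := fun ω => ∑ k ∈ Finset.Icc 1 t, X k ω)
      (f := fun n : ℕ => max (((∑ k ∈ Finset.Icc 1 t, q k : ℕ) : ℝ) - (n : ℝ)) 0)
      (hSmeas t h2).aemeasurable ((nv_meas_nat _).aestronglyMeasurable)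
    rw [hmapS t h1 h2] at hmap
    exact hmap.symm.trans (nv_Epos _ _)
  have hEneg : ∀ t, 1 ≤ t → t ≤ T →
      (∫ ω, max (-(∑ k ∈ Finset.Icc 1 t, ((q k : ℝ) - (X k ω : ℝ)))) 0 ∂P)
        = (((∑ k ∈ Finset.Icc 1 t, q k : ℕ) : ℝ)
            * (∑ x ∈ Finset.range ((∑ k ∈ Finset.Icc 1 t, q k) + 1),
                poissonPMFReal (∑ k ∈ Finset.Icc 1 t, lam k) x)
          - ((∑ k ∈ Finset.Icc 1 t, lam k : ℝ≥0) : ℝ)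
            * (∑ x ∈ Finset.range (∑ k ∈ Finset.Icc 1 t, q k),
                poissonPMFReal (∑ k ∈ Finset.Icc 1 t, lam k) x))
          + (((∑ k ∈ Finset.Icc 1 t, lam k : ℝ≥0) : ℝ)
              - ((∑ k ∈ Finset.Icc 1 t, q k : ℕ) : ℝ)) := by
    intro t h1 h2
    have hcast' : ∀ ω, -(∑ k ∈ Finset.Icc 1 t, ((q k : ℝ) - (X k ω : ℝ)))
        = ((∑ k ∈ Finset.Icc 1 t, X k ω : ℕ) : ℝ)
          - ((∑ k ∈ Finset.Icc 1 t, q k : ℕ) : ℝ) := by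
      intro ω; rw [hcast t ω]; ring
    simp_rw [hcast']
    have hmap := integral_map (μ := P) (φ := fun ω => ∑ k ∈ Finset.Icc 1 t, X k ω)
      (f := fun n : ℕ => max ((n : ℝ) - ((∑ k ∈ Finset.Icc 1 t, q k : ℕ) : ℝ)) 0)
      (hSmeas t h2).aemeasurable ((nv_meas_nat _).aestronglyMeasurable)
    rw [hmapS t h1 h2] at hmap
    exact hmap.symm.trans (nv_Eneg _ _)
  have hterm : ∀ t ∈ Finset.Icc 1 T,
      ((h + b + (if t = T then p else 0)) * ((∑ k ∈ Finset.Icc 1 t, q k : ℕ) : ℝ)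
            * (∑ x ∈ Finset.range ((∑ k ∈ Finset.Icc 1 t, q k) + 1),
                poissonPMFReal (∑ k ∈ Finset.Icc 1 t, lam k) x)
         - ((∑ k ∈ Finset.Icc 1 t, lam k : ℝ≥0) : ℝ)
            * (h + b + (if t = T then p else 0))
            * (∑ x ∈ Finset.range (∑ k ∈ Finset.Icc 1 t, q k),
                poissonPMFReal (∑ k ∈ Finset.Icc 1 t, lam k) x)
         + (b + (if t = T then p else 0))
            * (((∑ k ∈ Finset.Icc 1 t, lam k : ℝ≥0) : ℝ)
                - ((∑ k ∈ Finset.Icc 1 t, q k : ℕ) : ℝ))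
         + w t * (q t : ℝ) - p * (lam t : ℝ))
      = (h * (∫ ω, max (∑ k ∈ Finset.Icc 1 t, ((q k : ℝ) - (X k ω : ℝ))) 0 ∂P)
            + b * (∫ ω, max (-(∑ k ∈ Finset.Icc 1 t, ((q k : ℝ) - (X k ω : ℝ)))) 0 ∂P)
            + w t * (q t : ℝ) - p * (lam t : ℝ))
        + (if t = T then
            p * (∫ ω, max (-(∑ k ∈ Finset.Icc 1 t, ((q k : ℝ) - (X k ω : ℝ)))) 0 ∂P)
          else 0) := by
    intro t ht
    rw [Finset.mem_Icc] at ht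
    rw [hEpos t ht.1 ht.2, hEneg t ht.1 ht.2]
    split_ifs with hc <;> ring
  rw [Finset.sum_congr rfl hterm, Finset.sum_add_distrib,
    Finset.sum_ite_eq' (Finset.Icc 1 T) T, if_pos (by rw [Finset.mem_Icc]; omega)]
  ring
end

section
/- Let T ≥ 1, h, b, p ≥ 0, w ∈ ℝ^T, q ∈ ℕ^T, and fix λ_j > 0 for all j ≠ k. Define Q_t = Σ_{k'=1}^t q_{k'}, Λ_t = Σ_{k'=1}^t λ_{k'}, a_t = h + b + p·1{t=T}, F̃_t(n) = Σ_{x=0}^n e^{−Λ_t}Λ_t^x/x! (with F̃_t(−1) = 0), and C_λ(q) = Σ_{t=1}^T [ a_t·Q_t·F̃_t(Q_t) − Λ_t·a_t·F̃_t(Q_t − 1) + (b + p·1{t=T})·(Λ_t − Q_t) + w_t q_t − p·λ_t ]. Then for every k ∈ {1,...,T}, the function λ_k ↦ C_λ(q) is convex on (0, ∞). -/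
open Finset Real Set

lemma hasDerivAt_S (n : ℕ) (x : ℝ) :
    HasDerivAt (fun y : ℝ => ∑ i ∈ Finset.range (n+1), Real.exp (-y) * y ^ i / (Nat.factorial i))
      (-(Real.exp (-x) * x ^ n / (Nat.factorial n))) x := by
  induction n with
  | zero =>
      have h1 : HasDerivAt (fun y : ℝ => Real.exp (-y)) (-(Real.exp (-x))) x := by
        exact ((Real.hasDerivAt_exp (-x)).comp x ((hasDerivAt_id x).neg)).congr_deriv (by simp)
      have : (fun y : ℝ => ∑ i ∈ Finset.range 1, Real.exp (-y) * y ^ i / (Nat.factorial i))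
          = fun y : ℝ => Real.exp (-y) := by
        funext y; simp
      rw [this]; simpa using h1
  | succ n ih =>
      have hexp : HasDerivAt (fun y : ℝ => Real.exp (-y)) (-(Real.exp (-x))) x := by
        exact ((Real.hasDerivAt_exp (-x)).comp x ((hasDerivAt_id x).neg)).congr_deriv (by simp)
      have hterm := (hexp.mul (hasDerivAt_pow (n+1) x)).div_const ((Nat.factorial (n+1)) : ℝ)
      have hsum := ih.add hterm
      have heq : (fun y : ℝ => ∑ i ∈ Finset.range (n+2), Real.exp (-y) * y ^ i / (Nat.factorial i))
          = fun y : ℝ => (∑ i ∈ Finset.range (n+1), Real.exp (-y) * y ^ i / (Nat.factorial i))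
              + Real.exp (-y) * y ^ (n+1) / (Nat.factorial (n+1)) := by
        funext y; rw [Finset.sum_range_succ]
      rw [heq]
      refine hsum.congr_deriv ?_
      have hfac : ((Nat.factorial (n+1)) : ℝ) = (n+1) * (Nat.factorial n) := by
        push_cast [Nat.factorial_succ]; ring
      have h0 : ((Nat.factorial n) : ℝ) ≠ 0 := by positivity
      have h1 : ((n:ℝ)+1) ≠ 0 := by positivity
      rw [hfac]
      push_cast
      field_simp
      ring

lemma hasDerivAt_S_shift (n : ℕ) (c x : ℝ) :
    HasDerivAt (fun y : ℝ => ∑ i ∈ Finset.range (n+1), Real.exp (-(c+y)) * (c+y) ^ i / (Nat.factorial i))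
      (-(Real.exp (-(c+x)) * (c+x) ^ n / (Nat.factorial n))) x := by
  have hadd : HasDerivAt (fun y : ℝ => c + y) 1 x := by
    simpa using (hasDerivAt_id x).const_add c
  have h := HasDerivAt.comp x (hasDerivAt_S n (c+x)) hadd
  refine h.congr_deriv ?_
  ring

lemma affine_convexOn (m d : ℝ) : ConvexOn ℝ (Set.Ioi (0:ℝ)) (fun x => m * x + d) := by
  refine ⟨convex_Ioi 0, ?_⟩
  intro x _ y _ s t hs ht hst
  simp only [smul_eq_mul]
  have : m * (s * x + t * y) + d = s * (m * x + d) + t * (m * y + d) := by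
    linear_combination (-d) * hst
  linarith

/-- main convexity lemma for one term -/
lemma term_convex (a m d c : ℝ) (Q : ℕ) (ha : 0 ≤ a) (hc : 0 ≤ c) :
    ConvexOn ℝ (Set.Ioi (0:ℝ))
      (fun x => a * ((Q:ℝ) * (∑ i ∈ Finset.range (Q+1), Real.exp (-(c+x)) * (c+x) ^ i / (Nat.factorial i))
          - (c+x) * (∑ i ∈ Finset.range Q, Real.exp (-(c+x)) * (c+x) ^ i / (Nat.factorial i)))
        + m * x + d) := by
  match Q with
  | 0 =>
      have h0 : (fun x : ℝ => a * (((0:ℕ):ℝ) * (∑ i ∈ Finset.range (0+1), Real.exp (-(c+x)) * (c+x) ^ i / (Nat.factorial i))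
          - (c+x) * (∑ i ∈ Finset.range 0, Real.exp (-(c+x)) * (c+x) ^ i / (Nat.factorial i))) + m * x + d)
          = fun x => m * x + d := by
        funext x; simp
      rw [h0]; exact affine_convexOn m d
  | (n+1) =>
      have hf' : ∀ x : ℝ, HasDerivAt
          (fun x => a * (((n+1:ℕ):ℝ) * (∑ i ∈ Finset.range ((n+1)+1), Real.exp (-(c+x)) * (c+x) ^ i / (Nat.factorial i))
            - (c+x) * (∑ i ∈ Finset.range (n+1), Real.exp (-(c+x)) * (c+x) ^ i / (Nat.factorial i))) + m * x + d)
          (a * (-(∑ i ∈ Finset.range (n+1), Real.exp (-(c+x)) * (c+x) ^ i / (Nat.factorial i))) + m) x := by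
        intro x
        have hA := hasDerivAt_S_shift (n+1) c x
        have hB := hasDerivAt_S_shift n c x
        have hid : HasDerivAt (fun y : ℝ => c + y) 1 x := by
          simpa using (hasDerivAt_id x).const_add c
        have hprod := hid.mul hB
        have h1 := ((hA.const_mul ((n+1:ℕ):ℝ)).sub hprod).const_mul a
        have h2 := (h1.add ((hasDerivAt_id x).const_mul m)).add_const d
        refine h2.congr_deriv ?_
        have hfac : ((Nat.factorial (n+1)) : ℝ) = ((n:ℝ)+1) * (Nat.factorial n) := by
          push_cast [Nat.factorial_succ]; ring
        have h0 : ((Nat.factorial n) : ℝ) ≠ 0 := by positivity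
        have h1 : ((n:ℝ)+1) ≠ 0 := by positivity
        rw [hfac]
        push_cast
        have hpow : (c+x) ^ (n+1) = (c+x) ^ n * (c+x) := pow_succ _ _
        rw [hpow]
        field_simp
        ring
      have hf'' : ∀ x : ℝ, HasDerivAt
          (fun x => a * (-(∑ i ∈ Finset.range (n+1), Real.exp (-(c+x)) * (c+x) ^ i / (Nat.factorial i))) + m)
          (a * (Real.exp (-(c+x)) * (c+x) ^ n / (Nat.factorial n))) x := by
        intro x
        have hB := (hasDerivAt_S_shift n c x).neg
        have h2 := (hB.const_mul a).add_const m
        refine h2.congr_deriv ?_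
        ring
      refine convexOn_of_hasDerivWithinAt2_nonneg
        (f' := fun x => a * (-(∑ i ∈ Finset.range (n+1), Real.exp (-(c+x)) * (c+x) ^ i / (Nat.factorial i))) + m)
        (f'' := fun x => a * (Real.exp (-(c+x)) * (c+x) ^ n / (Nat.factorial n)))
        (convex_Ioi 0) ?_ ?_ ?_ ?_
      · exact fun x _ => ((hf' x).continuousAt).continuousWithinAt
      · exact fun x _ => (hf' x).hasDerivWithinAt
      · exact fun x _ => (hf'' x).hasDerivWithinAt
      · intro x hx
        rw [interior_Ioi] at hx
        have hcx : 0 ≤ c + x := by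
          have : (0:ℝ) < x := hx
          linarith
        positivity

lemma convexOn_finset_sum : ∀ (s : Finset ℕ) (f : ℕ → ℝ → ℝ),
    (∀ i ∈ s, ConvexOn ℝ (Set.Ioi (0:ℝ)) (f i)) →
    ConvexOn ℝ (Set.Ioi (0:ℝ)) (fun x => ∑ i ∈ s, f i x) := by
  intro s
  induction s using Finset.induction with
  | empty => intro f _; simpa using convexOn_const (0:ℝ) (convex_Ioi 0)
  | @insert i s hnot ih =>
      intro f hf
      simp only [Finset.sum_insert hnot]
      exact (hf _ (Finset.mem_insert_self _ _)).add
        (ih f fun j hj => hf j (Finset.mem_insert_of_mem hj))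

/-- Closed-form expected cost `C_λ(q)` of the multi-period newsvendor problem under
independent Poisson demands, as a function of the rate vector `lam`. -/
noncomputable def poissonCost (T : ℕ) (h b p : ℝ) (w : ℕ → ℝ) (q : ℕ → ℕ)
    (lam : ℕ → ℝ) : ℝ :=
  ∑ t ∈ Finset.Icc 1 T,
    ((h + b + (if t = T then p else 0)) * ((∑ k ∈ Finset.Icc 1 t, q k : ℕ) : ℝ)
        * (∑ x ∈ Finset.range ((∑ k ∈ Finset.Icc 1 t, q k) + 1),
            Real.exp (-(∑ k ∈ Finset.Icc 1 t, lam k))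
              * (∑ k ∈ Finset.Icc 1 t, lam k) ^ x / (Nat.factorial x))
     - (∑ k ∈ Finset.Icc 1 t, lam k) * (h + b + (if t = T then p else 0))
        * (∑ x ∈ Finset.range (∑ k ∈ Finset.Icc 1 t, q k),
            Real.exp (-(∑ k ∈ Finset.Icc 1 t, lam k))
              * (∑ k ∈ Finset.Icc 1 t, lam k) ^ x / (Nat.factorial x))
     + (b + (if t = T then p else 0))
        * ((∑ k ∈ Finset.Icc 1 t, lam k) - ((∑ k ∈ Finset.Icc 1 t, q k : ℕ) : ℝ))
     + w t * (q t : ℝ) - p * lam t)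

/-- The Poisson-demand newsvendor cost `C_λ(q)` is convex in each rate `λ k` on `(0, ∞)`
(with all other rates fixed). -/
theorem stmt_19
    (T : ℕ) (hT : 1 ≤ T)
    (h b p : ℝ) (hh : 0 ≤ h) (hb : 0 ≤ b) (hp : 0 ≤ p)
    (w : ℕ → ℝ) (q : ℕ → ℕ) (lam : ℕ → ℝ) :
    ∀ k, 1 ≤ k → k ≤ T →
      (∀ j, j ≠ k → 1 ≤ j → j ≤ T → 0 < lam j) →
      ConvexOn ℝ (Set.Ioi (0 : ℝ))
        (fun x : ℝ => poissonCost T h b p w q (Function.update lam k x)) := by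
  intro k hk1 hkT hlam
  simp only [poissonCost]
  apply convexOn_finset_sum
  intro t ht
  rw [Finset.mem_Icc] at ht
  have hite : (0:ℝ) ≤ (if t = T then p else 0) := by split <;> simp [hp]
  have ha : (0:ℝ) ≤ h + b + (if t = T then p else 0) := by linarith
  by_cases htk : t < k
  · -- term is constant in x
    have hupd : ∀ x : ℝ, ∑ j ∈ Finset.Icc 1 t, Function.update lam k x j
        = ∑ j ∈ Finset.Icc 1 t, lam j := by
      intro x
      refine Finset.sum_congr rfl fun j hj => ?_
      rw [Finset.mem_Icc] at hj
      exact Function.update_of_ne (by omega) _ _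
    have htk' : t ≠ k := by omega
    simp only [hupd, Function.update_of_ne htk']
    exact convexOn_const _ (convex_Ioi 0)
  · push_neg at htk
    have hmem : k ∈ Finset.Icc 1 t := Finset.mem_Icc.mpr ⟨hk1, htk⟩
    set c := ∑ j ∈ (Finset.Icc 1 t).erase k, lam j with hcdef
    have hc : 0 ≤ c := by
      apply Finset.sum_nonneg
      intro j hj
      rcases Finset.mem_erase.mp hj with ⟨hjk, hj'⟩
      rcases Finset.mem_Icc.mp hj' with ⟨h1j, hjt⟩
      exact le_of_lt (hlam j hjk h1j (le_trans hjt ht.2))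
    have hupd : ∀ x : ℝ, ∑ j ∈ Finset.Icc 1 t, Function.update lam k x j = c + x := by
      intro x
      rw [← Finset.add_sum_erase _ _ hmem, Function.update_self]
      have h2 : ∑ j ∈ (Finset.Icc 1 t).erase k, Function.update lam k x j = c := by
        refine Finset.sum_congr rfl fun j hj => ?_
        exact Function.update_of_ne (Finset.mem_erase.mp hj).1 _ _
      rw [h2]; ring
    simp only [hupd]
    set Q := ∑ j ∈ Finset.Icc 1 t, q j with hQdef
    by_cases htk2 : t = k
    · subst htk2
      simp only [Function.update_self]
      have htarget := term_convex (h + b + (if t = T then p else 0))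
        ((b + (if t = T then p else 0)) - p)
        ((b + (if t = T then p else 0)) * (c - (Q:ℝ)) + w t * (q t : ℝ))
        c Q ha hc
      convert htarget using 1
      funext x; ring
    · simp only [Function.update_of_ne htk2]
      have htarget := term_convex (h + b + (if t = T then p else 0))
        (b + (if t = T then p else 0))
        ((b + (if t = T then p else 0)) * (c - (Q:ℝ)) + w t * (q t : ℝ) - p * lam t)
        c Q ha hc
      convert htarget using 1
      funext x; ring
end
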